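/- arXiv:math-ph/0410032 — 5 statements merged into one kernel-verified Lean document; each statement's English description precedes it below -/
import Mathlib

section
/- For every field t ∈ ℝ^Λ and every site i ∈ Λ, the covariances K_{ij} of the local energies U_i under the constrained Gaussian measure satisfy the Ward identity ∑_{j∈Λ} K_{ij} = 2 ⟨U_i⟩_s. -/
/-!
STATEMENT 2: Ward identity ∑_j K_{ij} = 2⟨U_i⟩_s for the constrained Gaussian
measure ∝ e^{−B(s,t)} on the hyperplane {∑_i s_i = 0} ⊂ ℝ^Λ, where
B(s,t) = ∑'⟨i,j⟩ e^{t_i+t_j}(s_i−s_j)², U_i = ∑_{j:|i−j|=1} e^{t_i+t_j}(s_i−s_j)²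
and K_{ij} = ⟨U_i U_j⟩_s − ⟨U_i⟩_s⟨U_j⟩_s.  (Lebesgue measure on the
hyperplane is formalized as an arbitrary additive Haar measure on it; the
normalized expectations do not depend on this choice.)
-/

open MeasureTheory Real
open scoped Classical

noncomputable section

namespace SZ

/-- Nearest-neighbor (graph distance 1) relation on the discrete torus `(ℤ/Lℤ)^d`. -/
def Adj {d L : ℕ} (i j : Fin d → ZMod L) : Prop :=
  i ≠ j ∧ ∃ k : Fin d, j = Function.update i k (i k + 1) ∨ j = Function.update i k (i k - 1)

/-- Sum over unordered nearest-neighbor pairs of the torus (for symmetric `g`). -/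
def nnSum {d L : ℕ} [NeZero L] (g : (Fin d → ZMod L) → (Fin d → ZMod L) → ℝ) : ℝ :=
  (1 / 2) * ∑ i : Fin d → ZMod L, ∑ j : Fin d → ZMod L, if Adj i j then g i j else 0

/-- The hyperplane `{s : ℝ^Λ | ∑_i s_i = 0}`. -/
def hyper (d L : ℕ) [NeZero L] : Submodule ℝ ((Fin d → ZMod L) → ℝ) :=
  LinearMap.ker (∑ j : Fin d → ZMod L, LinearMap.proj j)

/-- `B(s,t) = ∑'⟨i,j⟩ e^{t_i+t_j}(s_i−s_j)²`. -/
def Bform {d L : ℕ} [NeZero L] (t s : (Fin d → ZMod L) → ℝ) : ℝ :=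
  nnSum (fun i j => Real.exp (t i + t j) * (s i - s j) ^ 2)

/-- `U_i(s) = ∑_{j:|i−j|=1} e^{t_i+t_j}(s_i−s_j)²`. -/
def Uloc {d L : ℕ} [NeZero L] (t : (Fin d → ZMod L) → ℝ) (i : Fin d → ZMod L)
    (s : (Fin d → ZMod L) → ℝ) : ℝ :=
  ∑ j : Fin d → ZMod L, if Adj i j then Real.exp (t i + t j) * (s i - s j) ^ 2 else 0

/-- Expectation `⟨F⟩_s` w.r.t. the measure with density `∝ e^{−B(s,t)}` on the
hyperplane `∑ s_i = 0` (relative to a Haar = Lebesgue measure `μ` on it). -/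
def savg (d L : ℕ) [NeZero L] (μ : Measure (hyper d L))
    (t : (Fin d → ZMod L) → ℝ) (F : ((Fin d → ZMod L) → ℝ) → ℝ) : ℝ :=
  (∫ s : hyper d L, F s * Real.exp (- Bform t s) ∂μ) /
  (∫ s : hyper d L, Real.exp (- Bform t s) ∂μ)

/-- The covariance `K_{ij} = ⟨U_i U_j⟩_s − ⟨U_i⟩_s ⟨U_j⟩_s`. -/
def Kmat (d L : ℕ) [NeZero L] (μ : Measure (hyper d L))
    (t : (Fin d → ZMod L) → ℝ) (i j : Fin d → ZMod L) : ℝ :=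
  savg d L μ t (fun s => Uloc t i s * Uloc t j s)
    - savg d L μ t (Uloc t i) * savg d L μ t (Uloc t j)

open Filter

/-- 1D Gaussian moment. -/
def J (m : ℕ) : ℝ := ∫ x : ℝ, x ^ m * Real.exp (-x ^ 2)

lemma intg (m : ℕ) : Integrable (fun x : ℝ => x ^ m * Real.exp (-x ^ 2)) := by
  have h := integrable_rpow_mul_exp_neg_mul_sq (b := 1) one_pos (s := (m : ℝ))
    (lt_of_lt_of_le (by norm_num) (Nat.cast_nonneg m))
  simpa [Real.rpow_natCast, neg_one_mul] using h

lemma J_odd (m : ℕ) (hm : Odd m) : J m = 0 := by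
  have h1 : (∫ x : ℝ, (-x) ^ m * Real.exp (-(-x) ^ 2)) = J m :=
    integral_neg_eq_self (fun x : ℝ => x ^ m * Real.exp (-x ^ 2)) volume
  have h2 : (∫ x : ℝ, (-x) ^ m * Real.exp (-(-x) ^ 2)) = - J m := by
    have : (∫ x : ℝ, (-x) ^ m * Real.exp (-(-x) ^ 2))
        = ∫ x : ℝ, -(x ^ m * Real.exp (-x ^ 2)) := by
      congr 1 with x
      rw [hm.neg_pow, neg_sq, neg_mul]
    rw [this, integral_neg]
    rfl
  have := h1.symm.trans h2
  linarith

lemma tendsto_pow_exp_zero (m : ℕ) :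
    Tendsto (fun x : ℝ => x ^ m * Real.exp (-x ^ 2)) atTop (nhds 0) := by
  have h := tendsto_pow_mul_exp_neg_atTop_nhds_zero m
  apply squeeze_zero' (g := fun x : ℝ => x ^ m * Real.exp (-x))
  · filter_upwards [eventually_ge_atTop (0 : ℝ)] with x hx
    positivity
  · filter_upwards [eventually_ge_atTop (1 : ℝ)] with x hx
    have hx0 : (0:ℝ) ≤ x := by linarith
    have : Real.exp (-x ^ 2) ≤ Real.exp (-x) := by
      apply Real.exp_le_exp.2; nlinarith
    exact mul_le_mul_of_nonneg_left this (pow_nonneg hx0 m)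
  · exact h

lemma J_rec (m : ℕ) : J (m + 2) = ((m : ℝ) + 1) / 2 * J m := by
  -- F x = x^(m+1) e^{-x²}, F' x = (m+1) x^m e^{-x²} - 2 x^(m+2) e^{-x²}
  set F : ℝ → ℝ := fun x => x ^ (m + 1) * Real.exp (-x ^ 2) with hF
  set F' : ℝ → ℝ := fun x =>
    ((m : ℝ) + 1) * (x ^ m * Real.exp (-x ^ 2)) - 2 * (x ^ (m + 2) * Real.exp (-x ^ 2)) with hF'
  have hderiv : ∀ x : ℝ, HasDerivAt F (F' x) x := by
    intro x
    have h1 : HasDerivAt (fun x : ℝ => x ^ (m + 1)) (((m : ℝ) + 1) * x ^ m) x := by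
      simpa using hasDerivAt_pow (m + 1) x
    have h2 : HasDerivAt (fun x : ℝ => Real.exp (-x ^ 2)) (Real.exp (-x ^ 2) * (-(2 * x))) x := by
      have : HasDerivAt (fun x : ℝ => -x ^ 2) (-(2 * x)) x := by
        simpa using (hasDerivAt_pow 2 x).fun_neg
      exact this.exp
    have := h1.fun_mul h2
    refine this.congr_deriv ?_
    simp only [hF']
    ring
  have hint : Integrable F' := by
    exact (((intg m).const_mul _).sub ((intg (m + 2)).const_mul 2))
  have htop : Tendsto F atTop (nhds 0) := tendsto_pow_exp_zero (m + 1)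
  have hbot : Tendsto F atBot (nhds 0) := by
    have := (tendsto_pow_exp_zero (m + 1)).comp tendsto_neg_atBot_atTop
    have heq : (fun x : ℝ => (-x) ^ (m + 1) * Real.exp (-(-x) ^ 2)) =
        fun x => (-1 : ℝ) ^ (m + 1) * F x := by
      funext x
      rw [hF]
      simp only [neg_pow (-x), neg_sq]
      rw [neg_pow x (m+1)]
      ring
    rw [Function.comp_def, heq] at this
    have := this.const_mul ((-1 : ℝ) ^ (m + 1))
    simpa [← mul_assoc, ← mul_pow] using this
  have hIoi : ∫ x in Set.Ioi (0:ℝ), F' x = 0 - F 0 :=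
    integral_Ioi_of_hasDerivAt_of_tendsto' (fun x _ => hderiv x) hint.integrableOn htop
  have hIic : ∫ x in Set.Iic (0:ℝ), F' x = F 0 - 0 :=
    integral_Iic_of_hasDerivAt_of_tendsto' (fun x _ => hderiv x) hint.integrableOn hbot
  have hsplit : (∫ x : ℝ, F' x) = 0 := by
    rw [← intervalIntegral.integral_Iic_add_Ioi (b := (0:ℝ)) hint.integrableOn hint.integrableOn, hIoi, hIic]
    ring
  have : ((m : ℝ) + 1) * J m - 2 * J (m + 2) = 0 := by
    rw [← hsplit, hF']
    rw [integral_sub (((intg m)).const_mul _) (((intg (m + 2))).const_mul 2),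
      integral_const_mul, integral_const_mul]
    rfl
  linarith

lemma J0_val : J 0 = Real.sqrt π := by
  have := integral_gaussian 1
  simpa [J] using this

lemma J0_pos : 0 < J 0 := by
  rw [J0_val]; exact Real.sqrt_pos.2 pi_pos

lemma J2_val : J 2 = J 0 / 2 := by have := J_rec 0; rw [this]; ring
lemma J4_val : J 4 = 3 / 4 * J 0 := by
  have h2 := J_rec 2
  have h0 := J_rec 0
  rw [show 4 = 2 + 2 from rfl, h2, h0]; ring
lemma J1_val : J 1 = 0 := J_odd 1 ⟨0, rfl⟩
lemma J3_val : J 3 = 0 := J_odd 3 ⟨1, rfl⟩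


lemma intJ (m : ℕ) : (∫ x : ℝ, x ^ m * Real.exp (-x ^ 2)) = J m := rfl
variable {n : ℕ}

def mono (g : Fin n → ℕ) (x : Fin n → ℝ) : ℝ := ∏ k, x k ^ g k

def Gs (x : Fin n → ℝ) : ℝ := Real.exp (-∑ k, x k ^ 2)

lemma mono_mul_Gs (g : Fin n → ℕ) (x : Fin n → ℝ) :
    mono g x * Gs x = ∏ k, (x k ^ g k * Real.exp (-x k ^ 2)) := by
  rw [mono, Gs, Finset.prod_mul_distrib]
  congr 1
  rw [← Real.exp_sum]
  congr 1
  rw [← Finset.sum_neg_distrib]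

lemma igble_mono (g : Fin n → ℕ) :
    Integrable (fun x : Fin n → ℝ => mono g x * Gs x) := by
  have : (fun x : Fin n → ℝ => mono g x * Gs x)
      = fun x => ∏ k, (x k ^ g k * Real.exp (-x k ^ 2)) := funext (mono_mul_Gs g)
  rw [this]
  exact Integrable.fintype_prod (fun k => intg (g k))

lemma int_mono (g : Fin n → ℕ) :
    ∫ x : Fin n → ℝ, mono g x * Gs x = ∏ k, J (g k) := by
  simp_rw [mono_mul_Gs g]
  rw [MeasureTheory.integral_fintype_prod_volume_eq_prod
    (f := fun (k : Fin n) (y : ℝ) => y ^ g k * Real.exp (-y ^ 2))]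
  exact Finset.prod_congr rfl fun k _ => intJ (g k)

def dd (k l : Fin n) : Fin n → ℕ := fun m => (if m = k then 1 else 0) + (if m = l then 1 else 0)

lemma mono_single (x : Fin n → ℝ) (k : Fin n) :
    (∏ m, x m ^ (if m = k then 1 else 0)) = x k := by
  have : ∀ m, x m ^ (if m = k then 1 else 0) = (if m = k then x m else 1) := by
    intro m; split_ifs <;> simp
  simp_rw [this]
  simp [Finset.prod_ite_eq']

lemma mono_dd (k l : Fin n) (x : Fin n → ℝ) : mono (dd k l) x = x k * x l := by
  rw [mono]
  simp_rw [dd, pow_add]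
  rw [Finset.prod_mul_distrib, mono_single, mono_single]

lemma mono_add (g h : Fin n → ℕ) (x : Fin n → ℝ) :
    mono (fun m => g m + h m) x = mono g x * mono h x := by
  simp [mono, pow_add, Finset.prod_mul_distrib]

lemma igble_xx (k l : Fin n) :
    Integrable (fun x : Fin n → ℝ => x k * x l * Gs x) := by
  have := igble_mono (dd k l)
  simpa [mono_dd] using this

lemma int_xx (k l : Fin n) :
    ∫ x : Fin n → ℝ, x k * x l * Gs x = ∏ m, J (dd k l m) := by
  rw [← int_mono (dd k l)]
  congr 1 with x
  rw [mono_dd]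

lemma igble_xxmm (k l a : Fin n) :
    Integrable (fun x : Fin n → ℝ => x k * x l * (x a ^ 2 * Gs x)) := by
  have h : (fun x : Fin n → ℝ => x k * x l * (x a ^ 2 * Gs x))
      = fun x => mono (fun m => dd k l m + dd a a m) x * Gs x := by
    funext x; rw [mono_add, mono_dd, mono_dd]; ring
  rw [h]; exact igble_mono _

lemma int_xxmm (k l a : Fin n) :
    ∫ x : Fin n → ℝ, x k * x l * (x a ^ 2 * Gs x) = ∏ m, J (dd k l m + dd a a m) := by
  rw [← int_mono]
  congr 1 with x
  rw [mono_add, mono_dd, mono_dd]; ring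

lemma igble_xxxx (k l a b : Fin n) :
    Integrable (fun x : Fin n → ℝ => x k * x l * (x a * x b * Gs x)) := by
  have h : (fun x : Fin n → ℝ => x k * x l * (x a * x b * Gs x))
      = fun x => mono (fun m => dd k l m + dd a b m) x * Gs x := by
    funext x; rw [mono_add, mono_dd, mono_dd]; ring
  rw [h]; exact igble_mono _

lemma igble_mm (a : Fin n) : Integrable (fun x : Fin n → ℝ => x a ^ 2 * Gs x) := by
  have := igble_xx a a
  have h : (fun x : Fin n → ℝ => x a ^ 2 * Gs x) = fun x => x a * x a * Gs x := by
    funext x; ring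
  rw [h]; exact this

lemma igble_S : Integrable (fun x : Fin n → ℝ => (∑ m, x m ^ 2) * Gs x) := by
  have h : (fun x : Fin n → ℝ => (∑ m, x m ^ 2) * Gs x)
      = fun x => ∑ m, x m ^ 2 * Gs x := by
    funext x; rw [Finset.sum_mul]
  rw [h]
  exact integrable_finset_sum _ (fun m _ => igble_mm m)

lemma igble_xxS (k l : Fin n) :
    Integrable (fun x : Fin n → ℝ => x k * x l * ((∑ m, x m ^ 2) * Gs x)) := by
  have h : (fun x : Fin n → ℝ => x k * x l * ((∑ m, x m ^ 2) * Gs x))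
      = fun x => ∑ m, x k * x l * (x m ^ 2 * Gs x) := by
    funext x; rw [Finset.sum_mul, Finset.mul_sum]
  rw [h]
  exact integrable_finset_sum _ (fun m _ => igble_xxmm k l m)

/-- one-point product evaluation -/
lemma Jp_one (g : Fin n → ℕ) (k : Fin n) (h : ∀ p, p ≠ k → g p = 0) :
    ∏ p, J (g p) = J (g k) * J 0 ^ (n - 1) := by
  rw [← Finset.mul_prod_erase _ _ (Finset.mem_univ k)]
  congr 1
  rw [Finset.prod_congr rfl (fun p hp => by
    rw [h p (Finset.ne_of_mem_erase hp)]), Finset.prod_const,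
    Finset.card_erase_of_mem (Finset.mem_univ k), Finset.card_univ, Fintype.card_fin]

/-- two-point product evaluation -/
lemma Jp_two (g : Fin n → ℕ) (k m : Fin n) (hkm : m ≠ k)
    (h : ∀ p, p ≠ k → p ≠ m → g p = 0) :
    ∏ p, J (g p) = J (g k) * (J (g m) * J 0 ^ (n - 2)) := by
  rw [← Finset.mul_prod_erase _ _ (Finset.mem_univ k)]
  congr 1
  rw [← Finset.mul_prod_erase _ _ (Finset.mem_erase.2 ⟨hkm, Finset.mem_univ m⟩)]
  congr 1
  rw [Finset.prod_congr rfl (fun p hp => by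
    have h1 := Finset.ne_of_mem_erase hp
    have h2 := Finset.ne_of_mem_erase (Finset.mem_of_mem_erase hp)
    rw [h p h2 h1]), Finset.prod_const,
    Finset.card_erase_of_mem (Finset.mem_erase.2 ⟨hkm, Finset.mem_univ m⟩),
    Finset.card_erase_of_mem (Finset.mem_univ k), Finset.card_univ, Fintype.card_fin,
    Nat.sub_sub]

lemma int_Gs : ∫ x : Fin n → ℝ, Gs x = J 0 ^ n := by
  have h := int_mono (n := n) (fun _ => 0)
  simp only [mono, pow_zero, Finset.prod_const_one, one_mul] at h
  rw [h, Finset.prod_const, Finset.card_univ, Fintype.card_fin]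

lemma int_Gs_pos : 0 < ∫ x : Fin n → ℝ, Gs x := by
  rw [int_Gs]; exact pow_pos J0_pos n

lemma int_mm (a : Fin n) :
    ∫ x : Fin n → ℝ, x a ^ 2 * Gs x = J 2 * J 0 ^ (n - 1) := by
  have h : (fun x : Fin n → ℝ => x a ^ 2 * Gs x) = fun x => x a * x a * Gs x := by
    funext x; ring
  rw [h, int_xx, Jp_one _ a (fun p hp => by simp [dd, hp])]
  congr 2
  simp [dd]

lemma int_S : ∫ x : Fin n → ℝ, (∑ m, x m ^ 2) * Gs x = n * (J 2 * J 0 ^ (n - 1)) := by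
  have h : (fun x : Fin n → ℝ => (∑ m, x m ^ 2) * Gs x)
      = fun x => ∑ m, x m ^ 2 * Gs x := by
    funext x; rw [Finset.sum_mul]
  rw [h, integral_finset_sum _ (fun m _ => igble_mm m)]
  rw [Finset.sum_congr rfl (fun m _ => int_mm m), Finset.sum_const, Finset.card_univ,
    Fintype.card_fin, nsmul_eq_mul]

/-- The key per-monomial Ward-type identity. -/
lemma KEYkl (k l : Fin n) :
    (∫ x : Fin n → ℝ, x k * x l * ((∑ m, x m ^ 2) * Gs x)) * (∫ x : Fin n → ℝ, Gs x)
      = (∫ x : Fin n → ℝ, x k * x l * Gs x) *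
        ((∫ x : Fin n → ℝ, (∑ m, x m ^ 2) * Gs x) + ∫ x : Fin n → ℝ, Gs x) := by
  have hsum : (∫ x : Fin n → ℝ, x k * x l * ((∑ m, x m ^ 2) * Gs x))
      = ∑ a, ∏ m, J (dd k l m + dd a a m) := by
    have h : (fun x : Fin n → ℝ => x k * x l * ((∑ m, x m ^ 2) * Gs x))
        = fun x => ∑ a, x k * x l * (x a ^ 2 * Gs x) := by
      funext x; rw [Finset.sum_mul, Finset.mul_sum]
    rw [h, integral_finset_sum _ (fun a _ => igble_xxmm k l a)]
    exact Finset.sum_congr rfl fun a _ => int_xxmm k l a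
  by_cases hkl : k = l
  · subst hkl
    have hn : 0 < n := k.pos
    have hPk : (∏ m, J (dd k k m + dd k k m)) = J 4 * J 0 ^ (n - 1) := by
      rw [Jp_one _ k (fun p hp => by simp [dd, hp])]
      have e1 : dd k k k + dd k k k = 4 := by simp [dd]
      rw [e1]
    have hPm : ∀ a, a ≠ k → (∏ m, J (dd k k m + dd a a m)) = J 2 * (J 2 * J 0 ^ (n - 2)) := by
      intro a ha
      have e1 : dd k k k + dd a a k = 2 := by simp [dd, Ne.symm ha]
      have e2 : dd k k a + dd a a a = 2 := by simp [dd, ha]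
      rw [Jp_two _ k a ha (fun p h1 h2 => by simp [dd, h1, h2]), e1, e2]
    have hsum2 : (∑ a, ∏ m, J (dd k k m + dd a a m))
        = J 4 * J 0 ^ (n - 1) + ((n - 1 : ℕ) : ℝ) * (J 2 * (J 2 * J 0 ^ (n - 2))) := by
      rw [← Finset.add_sum_erase _ _ (Finset.mem_univ k), hPk]
      congr 1
      rw [Finset.sum_congr rfl (fun a ha => hPm a (Finset.ne_of_mem_erase ha)),
        Finset.sum_const, Finset.card_erase_of_mem (Finset.mem_univ k), Finset.card_univ,
        Fintype.card_fin, nsmul_eq_mul]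
    have hdiag : (∫ x : Fin n → ℝ, x k * x k * Gs x) = J 2 * J 0 ^ (n - 1) := by
      rw [← int_mm k]
      congr 1 with x; ring
    rw [hsum, hsum2, hdiag, int_S, int_Gs]
    obtain ⟨p, rfl⟩ : ∃ p, n = p + 1 := ⟨n - 1, (Nat.succ_pred_eq_of_pos hn).symm⟩
    cases p with
    | zero => rw [J4_val, J2_val]; norm_num; ring
    | succ q =>
      have c1 : (q + 1 + 1 : ℕ) - 1 = q + 1 := rfl
      have c2 : (q + 1 + 1 : ℕ) - 2 = q := rfl
      rw [c1, c2, J4_val, J2_val]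
      push_cast
      ring
  · -- off-diagonal: both sides vanish
    have hxl : (∫ x : Fin n → ℝ, x k * x l * Gs x) = 0 := by
      rw [int_xx]
      apply Finset.prod_eq_zero (Finset.mem_univ k)
      have : dd k l k = 1 := by simp [dd, hkl]
      rw [this, J1_val]
    have hxs : (∫ x : Fin n → ℝ, x k * x l * ((∑ m, x m ^ 2) * Gs x)) = 0 := by
      rw [hsum]
      apply Finset.sum_eq_zero
      intro a _
      apply Finset.prod_eq_zero (Finset.mem_univ k)
      by_cases hak : a = k
      · have h3 : dd k l k + dd a a k = 3 := by rw [hak]; simp [dd, hkl]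
        rw [h3, J3_val]
      · have h1 : dd k l k + dd a a k = 1 := by simp [dd, hkl, Ne.symm hak]
        rw [h1, J1_val]
    rw [hxl, hxs, zero_mul, zero_mul]


def qf (M : Fin n → Fin n → ℝ) (x : Fin n → ℝ) : ℝ := ∑ k, ∑ l, M k l * (x k * x l)

lemma qf_Gs_eq (M : Fin n → Fin n → ℝ) :
    (fun x : Fin n → ℝ => qf M x * Gs x)
      = fun x => ∑ k, ∑ l, M k l * (x k * x l * Gs x) := by
  funext x
  rw [qf, Finset.sum_mul]
  refine Finset.sum_congr rfl fun k _ => ?_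
  rw [Finset.sum_mul]
  exact Finset.sum_congr rfl fun l _ => by ring

lemma igble_qf_Gs (M : Fin n → Fin n → ℝ) :
    Integrable (fun x : Fin n → ℝ => qf M x * Gs x) := by
  rw [qf_Gs_eq]
  exact integrable_finset_sum _ fun k _ =>
    integrable_finset_sum _ fun l _ => (igble_xx k l).const_mul _

lemma int_qf_Gs (M : Fin n → Fin n → ℝ) :
    ∫ x : Fin n → ℝ, qf M x * Gs x
      = ∑ k, ∑ l, M k l * ∫ x : Fin n → ℝ, x k * x l * Gs x := by
  rw [qf_Gs_eq, integral_finset_sum _ (fun k _ =>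
    integrable_finset_sum _ fun l _ => (igble_xx k l).const_mul _)]
  refine Finset.sum_congr rfl fun k _ => ?_
  rw [integral_finset_sum _ (fun l _ => (igble_xx k l).const_mul _)]
  exact Finset.sum_congr rfl fun l _ => integral_const_mul _ _

lemma qf_S_Gs_eq (M : Fin n → Fin n → ℝ) :
    (fun x : Fin n → ℝ => qf M x * ((∑ m, x m ^ 2) * Gs x))
      = fun x => ∑ k, ∑ l, M k l * (x k * x l * ((∑ m, x m ^ 2) * Gs x)) := by
  funext x
  rw [qf, Finset.sum_mul]
  refine Finset.sum_congr rfl fun k _ => ?_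
  rw [Finset.sum_mul]
  exact Finset.sum_congr rfl fun l _ => by ring

lemma igble_qf_S_Gs (M : Fin n → Fin n → ℝ) :
    Integrable (fun x : Fin n → ℝ => qf M x * ((∑ m, x m ^ 2) * Gs x)) := by
  rw [qf_S_Gs_eq]
  exact integrable_finset_sum _ fun k _ =>
    integrable_finset_sum _ fun l _ => (igble_xxS k l).const_mul _

lemma int_qf_S_Gs (M : Fin n → Fin n → ℝ) :
    ∫ x : Fin n → ℝ, qf M x * ((∑ m, x m ^ 2) * Gs x)
      = ∑ k, ∑ l, M k l * ∫ x : Fin n → ℝ, x k * x l * ((∑ m, x m ^ 2) * Gs x) := by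
  rw [qf_S_Gs_eq, integral_finset_sum _ (fun k _ =>
    integrable_finset_sum _ fun l _ => (igble_xxS k l).const_mul _)]
  refine Finset.sum_congr rfl fun k _ => ?_
  rw [integral_finset_sum _ (fun l _ => (igble_xxS k l).const_mul _)]
  exact Finset.sum_congr rfl fun l _ => integral_const_mul _ _

lemma igble_qf_qf_Gs (M N : Fin n → Fin n → ℝ) :
    Integrable (fun x : Fin n → ℝ => qf M x * (qf N x * Gs x)) := by
  have h : (fun x : Fin n → ℝ => qf M x * (qf N x * Gs x))
      = fun x => ∑ k, ∑ l, ∑ a, ∑ b,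
          N k l * (M a b * (x a * x b * (x k * x l * Gs x))) := by
    funext x
    simp only [qf, Finset.sum_mul, Finset.mul_sum]
    refine Finset.sum_congr rfl fun k _ => Finset.sum_congr rfl fun l _ =>
      Finset.sum_congr rfl fun a _ => Finset.sum_congr rfl fun b _ => by ring
  rw [h]
  exact integrable_finset_sum _ fun k _ => integrable_finset_sum _ fun l _ =>
    integrable_finset_sum _ fun a _ => integrable_finset_sum _ fun b _ =>
      ((igble_xxxx a b k l).const_mul _).const_mul _

/-- Key Ward-type identity for quadratic forms. -/
lemma KEYM (M : Fin n → Fin n → ℝ) :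
    (∫ x : Fin n → ℝ, qf M x * ((∑ m, x m ^ 2) * Gs x)) * (∫ x : Fin n → ℝ, Gs x)
      = (∫ x : Fin n → ℝ, qf M x * Gs x) *
        ((∫ x : Fin n → ℝ, (∑ m, x m ^ 2) * Gs x) + ∫ x : Fin n → ℝ, Gs x) := by
  rw [int_qf_S_Gs, int_qf_Gs, Finset.sum_mul, Finset.sum_mul]
  refine Finset.sum_congr rfl fun k _ => ?_
  rw [Finset.sum_mul, Finset.sum_mul]
  refine Finset.sum_congr rfl fun l _ => ?_
  rw [mul_assoc, mul_assoc, KEYkl k l]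

-- ######## new stuff ########
variable {d L : ℕ} [NeZero L]

/-- edge weight -/
def w (t : (Fin d → ZMod L) → ℝ) (i j : Fin d → ZMod L) : ℝ :=
  if Adj i j then Real.exp (t i + t j) else 0

lemma w_nonneg (t : (Fin d → ZMod L) → ℝ) (i j) : 0 ≤ w t i j := by
  unfold w; split_ifs; exacts [(Real.exp_pos _).le, le_rfl]

lemma Uloc_eq (t : (Fin d → ZMod L) → ℝ) (i : Fin d → ZMod L) (s) :
    Uloc t i s = ∑ j, w t i j * (s i - s j) ^ 2 := by
  unfold Uloc w
  refine Finset.sum_congr rfl fun j _ => ?_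
  split_ifs <;> simp

lemma Bform_eq (t s : (Fin d → ZMod L) → ℝ) :
    Bform t s = (1 / 2) * ∑ i, ∑ j, w t i j * (s i - s j) ^ 2 := by
  unfold Bform nnSum w
  congr 1
  refine Finset.sum_congr rfl fun i _ => Finset.sum_congr rfl fun j _ => ?_
  split_ifs <;> simp

lemma sum_Uloc (t s : (Fin d → ZMod L) → ℝ) :
    ∑ i, Uloc t i s = 2 * Bform t s := by
  rw [Bform_eq]
  rw [Finset.sum_congr rfl fun i _ => Uloc_eq t i s]
  ring

lemma mem_hyper_iff {s : (Fin d → ZMod L) → ℝ} : s ∈ hyper d L ↔ ∑ j, s j = 0 := by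
  simp [hyper, LinearMap.mem_ker, LinearMap.sum_apply, LinearMap.proj_apply]

section conn
variable (hL : 2 ≤ L) {v : (Fin d → ZMod L) → ℝ}
  (hadj : ∀ p q, Adj p q → v p = v q)

include hL hadj

lemma step1 (p : Fin d → ZMod L) (k : Fin d) :
    v p = v (Function.update p k (p k + 1)) := by
  haveI : Fact (1 < L) := ⟨hL⟩
  apply hadj
  constructor
  · intro heq
    have := congrFun heq k
    rw [Function.update_self] at this
    exact one_ne_zero (left_eq_add.mp this)
  · exact ⟨k, Or.inl rfl⟩

lemma step_nat (p : Fin d → ZMod L) (k : Fin d) (m : ℕ) :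
    v p = v (Function.update p k (p k + m)) := by
  induction m with
  | zero => simp
  | succ m ih =>
    rw [ih, step1 hL hadj (Function.update p k (p k + m)) k]
    congr 1
    rw [Function.update_idem, Function.update_self]
    congr 1
    push_cast
    ring

lemma step_any (p : Fin d → ZMod L) (k : Fin d) (c : ZMod L) :
    v p = v (Function.update p k c) := by
  have h := step_nat hL hadj p k (c - p k).val
  rwa [ZMod.natCast_val, ZMod.cast_id, add_sub_cancel] at h

lemma const_on_finset :
    ∀ (F : Finset (Fin d)) (p q : Fin d → ZMod L),
      (∀ k, k ∉ F → p k = q k) → v p = v q := by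
  intro F
  induction F using Finset.induction_on with
  | empty =>
    intro p q h
    have : p = q := funext fun k => h k (Finset.notMem_empty k)
    rw [this]
  | @insert a F ha ih =>
    intro p q h
    have h1 : v p = v (Function.update p a (q a)) := step_any hL hadj p a (q a)
    rw [h1]
    apply ih
    intro k hk
    by_cases hka : k = a
    · subst hka; rw [Function.update_self]
    · rw [Function.update_of_ne hka]
      exact h k (by simp [hka, hk])

lemma v_const (p q : Fin d → ZMod L) : v p = v q :=
  const_on_finset hL hadj Finset.univ p q (fun k hk => absurd (Finset.mem_univ k) hk)

end conn

/-- positive semidefiniteness and definiteness of B on the hyperplane -/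
lemma Bform_nonneg (t s : (Fin d → ZMod L) → ℝ) : 0 ≤ Bform t s := by
  rw [Bform_eq]
  apply mul_nonneg (by norm_num)
  apply Finset.sum_nonneg fun i _ => Finset.sum_nonneg fun j _ =>
    mul_nonneg (w_nonneg t i j) (sq_nonneg _)

lemma Bform_zero_imp (hL : 2 ≤ L) (t : (Fin d → ZMod L) → ℝ) (v : hyper d L)
    (hB : Bform t (v : (Fin d → ZMod L) → ℝ) = 0) : v = 0 := by
  set s : (Fin d → ZMod L) → ℝ := (v : (Fin d → ZMod L) → ℝ) with hs
  have hterm : ∀ p q, Adj p q → s p = s q := by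
    intro p q hpq
    rw [Bform_eq] at hB
    have h0 : ∑ i, ∑ j, w t i j * (s i - s j) ^ 2 = 0 := by linarith
    have hnn : ∀ i ∈ Finset.univ, (0:ℝ) ≤ ∑ j, w t i j * (s i - s j) ^ 2 :=
      fun i _ => Finset.sum_nonneg fun j _ => mul_nonneg (w_nonneg t i j) (sq_nonneg _)
    have hrow := (Finset.sum_eq_zero_iff_of_nonneg hnn).mp h0 p (Finset.mem_univ p)
    have hentry := (Finset.sum_eq_zero_iff_of_nonneg
      (fun j _ => mul_nonneg (w_nonneg t p j) (sq_nonneg _))).mp hrow q (Finset.mem_univ q)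
    have hw : w t p q = Real.exp (t p + t q) := by unfold w; rw [if_pos hpq]
    rw [hw] at hentry
    have := mul_eq_zero.mp hentry
    rcases this with h | h
    · exact absurd h (Real.exp_ne_zero _)
    · have := sq_eq_zero_iff.mp h; linarith
  have hconst : ∀ p q, s p = s q := v_const hL hterm
  have hsum : ∑ j, s j = 0 := mem_hyper_iff.mp v.2
  have hcard : (0:ℝ) < (Fintype.card (Fin d → ZMod L) : ℝ) := by
    have : 0 < Fintype.card (Fin d → ZMod L) := Fintype.card_pos
    exact_mod_cast this
  have hzero : ∀ q, s q = 0 := by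
    intro q
    have : ∑ j, s j = (Fintype.card (Fin d → ZMod L) : ℝ) * s q := by
      rw [Finset.sum_congr rfl fun j _ => hconst j q, Finset.sum_const, Finset.card_univ,
        nsmul_eq_mul]
    rw [this] at hsum
    rcases mul_eq_zero.mp hsum with h | h
    · exact absurd h (ne_of_gt hcard)
    · exact h
  apply Subtype.ext
  funext q
  exact hzero q

/-- difference functional -/
def Df (p q : Fin d → ZMod L) : (hyper d L) →ₗ[ℝ] ℝ :=
  ((LinearMap.proj p : ((Fin d → ZMod L) → ℝ) →ₗ[ℝ] ℝ) - LinearMap.proj q).comp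
    (hyper d L).subtype

lemma Df_apply (p q : Fin d → ZMod L) (u : hyper d L) :
    Df p q u = (u : (Fin d → ZMod L) → ℝ) p - (u : (Fin d → ZMod L) → ℝ) q := by
  simp [Df]

/-- the polarization of B as a bilinear form -/
def bil (t : (Fin d → ZMod L) → ℝ) : (hyper d L) →ₗ[ℝ] (hyper d L) →ₗ[ℝ] ℝ :=
  ∑ p, ∑ q, ((1 / 2) * w t p q) • ((Df p q).smulRight (Df p q))

lemma bil_apply (t : (Fin d → ZMod L) → ℝ) (u v : hyper d L) :
    bil t u v = ∑ p, ∑ q, (1 / 2) * w t p q *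
      (((u : (Fin d → ZMod L) → ℝ) p - (u : (Fin d → ZMod L) → ℝ) q) *
       ((v : (Fin d → ZMod L) → ℝ) p - (v : (Fin d → ZMod L) → ℝ) q)) := by
  simp only [bil, LinearMap.coe_sum, Finset.sum_apply, LinearMap.smul_apply,
    LinearMap.smulRight_apply, smul_eq_mul, Df_apply]

lemma bil_self (t : (Fin d → ZMod L) → ℝ) (u : hyper d L) :
    bil t u u = Bform t (u : (Fin d → ZMod L) → ℝ) := by
  rw [bil_apply, Bform_eq, Finset.mul_sum]
  refine Finset.sum_congr rfl fun p _ => ?_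
  rw [Finset.mul_sum]
  refine Finset.sum_congr rfl fun q _ => by ring

lemma bil_isSymm (t : (Fin d → ZMod L) → ℝ) : (bil t).IsSymm := by
  refine ⟨fun u v => ?_⟩
  rw [RingHom.id_apply, bil_apply, bil_apply]
  refine Finset.sum_congr rfl fun p _ => Finset.sum_congr rfl fun q _ => by ring

lemma exists_good_basis (hL : 2 ≤ L) (t : (Fin d → ZMod L) → ℝ) :
    ∃ b : Module.Basis (Fin (Module.finrank ℝ (hyper d L))) ℝ (hyper d L),
      ∀ k l, bil t (b k) (b l) = if k = l then 1 else 0 := by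
  haveI : Invertible (2:ℝ) := invertibleOfNonzero two_ne_zero
  obtain ⟨v, hv⟩ := LinearMap.BilinForm.exists_orthogonal_basis (bil_isSymm t)
  have hpos : ∀ k, 0 < bil t (v k) (v k) := by
    intro k
    have h0 : bil t (v k) (v k) = Bform t ((v k : hyper d L) : (Fin d → ZMod L) → ℝ) :=
      bil_self t (v k)
    rcases (Bform_nonneg t ((v k : hyper d L) : (Fin d → ZMod L) → ℝ)).lt_or_eq with h | h
    · rwa [h0]
    · exfalso
      exact v.ne_zero k (Bform_zero_imp hL t (v k) h.symm)
  set c : Fin (Module.finrank ℝ (hyper d L)) → ℝˣ := fun k =>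
    Units.mk0 ((Real.sqrt (bil t (v k) (v k)))⁻¹)
      (inv_ne_zero (Real.sqrt_ne_zero'.mpr (hpos k))) with hc
  refine ⟨v.unitsSMul c, fun k l => ?_⟩
  have expand : bil t ((v.unitsSMul c) k) ((v.unitsSMul c) l)
      = (c k : ℝ) * ((c l : ℝ) * bil t (v k) (v l)) := by
    rw [Module.Basis.unitsSMul_apply, Module.Basis.unitsSMul_apply, Units.smul_def, Units.smul_def]
    simp only [_root_.map_smul, LinearMap.smul_apply, smul_eq_mul]
    ring
  rw [expand]
  by_cases hkl : k = l
  · subst hkl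
    rw [if_pos rfl]
    have ha : Real.sqrt ((bil t (v k)) (v k)) ≠ 0 := Real.sqrt_ne_zero'.mpr (hpos k)
    have hsq : Real.sqrt ((bil t (v k)) (v k)) * Real.sqrt ((bil t (v k)) (v k))
        = (bil t (v k)) (v k) := Real.mul_self_sqrt (hpos k).le
    simp only [hc, Units.val_mk0]
    rw [← hsq]
    field_simp
    rw [Real.sqrt_sq (Real.sqrt_nonneg _)]
  · rw [if_neg hkl, hv hkl]
    simp

lemma coe_equivFun_symm {N : ℕ} (b : Module.Basis (Fin N) ℝ (hyper d L)) (x : Fin N → ℝ)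
    (p : Fin d → ZMod L) :
    ((b.equivFun.symm x : hyper d L) : (Fin d → ZMod L) → ℝ) p
      = ∑ k, x k * ((b k : (Fin d → ZMod L) → ℝ) p) := by
  rw [Module.Basis.equivFun_symm_apply]
  simp [Finset.sum_apply, smul_eq_mul]

lemma diff_expand {N : ℕ} (b : Module.Basis (Fin N) ℝ (hyper d L)) (x : Fin N → ℝ)
    (p q : Fin d → ZMod L) :
    ((b.equivFun.symm x : hyper d L) : (Fin d → ZMod L) → ℝ) p
      - ((b.equivFun.symm x : hyper d L) : (Fin d → ZMod L) → ℝ) q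
      = ∑ k, x k * (Df p q (b k)) := by
  rw [coe_equivFun_symm, coe_equivFun_symm, ← Finset.sum_sub_distrib]
  exact Finset.sum_congr rfl fun k _ => by rw [Df_apply]; ring

lemma B_transport (t : (Fin d → ZMod L) → ℝ)
    {N : ℕ} (b : Module.Basis (Fin N) ℝ (hyper d L))
    (hb : ∀ k l, bil t (b k) (b l) = if k = l then 1 else 0) (x : Fin N → ℝ) :
    Bform t ((b.equivFun.symm x : hyper d L) : (Fin d → ZMod L) → ℝ) = ∑ k, x k ^ 2 := by
  rw [← bil_self, Module.Basis.equivFun_symm_apply]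
  simp only [map_sum, LinearMap.sum_apply, _root_.map_smul, LinearMap.smul_apply, smul_eq_mul,
    hb]
  simp [mul_ite, Finset.sum_ite_eq', sq]

def MUmat (t : (Fin d → ZMod L) → ℝ) {N : ℕ} (b : Module.Basis (Fin N) ℝ (hyper d L))
    (i : Fin d → ZMod L) (k l : Fin N) : ℝ :=
  ∑ q, w t i q * (Df i q (b k) * Df i q (b l))

lemma U_transport (t : (Fin d → ZMod L) → ℝ)
    {N : ℕ} (b : Module.Basis (Fin N) ℝ (hyper d L)) (i : Fin d → ZMod L) (x : Fin N → ℝ) :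
    Uloc t i ((b.equivFun.symm x : hyper d L) : (Fin d → ZMod L) → ℝ)
      = qf (MUmat t b i) x := by
  rw [Uloc_eq]
  have h1 : ∀ q : Fin d → ZMod L,
      w t i q * (((b.equivFun.symm x : hyper d L) : (Fin d → ZMod L) → ℝ) i
        - ((b.equivFun.symm x : hyper d L) : (Fin d → ZMod L) → ℝ) q) ^ 2
      = ∑ k, ∑ l, w t i q * (Df i q (b k) * Df i q (b l)) * (x k * x l) := by
    intro q
    rw [diff_expand, sq, Finset.sum_mul_sum]
    rw [Finset.mul_sum]
    refine Finset.sum_congr rfl fun k _ => ?_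
    rw [Finset.mul_sum]
    exact Finset.sum_congr rfl fun l _ => by ring
  rw [Finset.sum_congr rfl fun q _ => h1 q]
  rw [Finset.sum_comm]
  refine Finset.sum_congr rfl fun k _ => ?_
  rw [Finset.sum_comm]
  refine Finset.sum_congr rfl fun l _ => ?_
  rw [MUmat, Finset.sum_mul]


section assembly
variable {d L : ℕ} [NeZero L]

lemma integral_transport (μ : Measure (hyper d L)) [μ.IsAddHaarMeasure]
    {N : ℕ} (b : Module.Basis (Fin N) ℝ (hyper d L)) :
    ∃ c : ℝ, 0 < c ∧ ∀ H : hyper d L → ℝ,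
      ∫ s, H s ∂μ = c * ∫ x : Fin N → ℝ, H (b.equivFun.symm x) := by
  let e : hyper d L ≃L[ℝ] (Fin N → ℝ) := b.equivFun.toContinuousLinearEquiv
  let me : hyper d L ≃ᵐ (Fin N → ℝ) := e.toHomeomorph.toMeasurableEquiv
  let ν : Measure (Fin N → ℝ) := μ.map me
  have hν : ν = μ.map e := rfl
  haveI : ν.IsAddHaarMeasure := by rw [hν]; infer_instance
  have huniq : ν = (Measure.addHaarScalarFactor ν (volume : Measure (Fin N → ℝ)))
      • (volume : Measure (Fin N → ℝ)) :=
    Measure.isAddLeftInvariant_eq_smul ν volume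
  have hc0 : 0 < Measure.addHaarScalarFactor ν (volume : Measure (Fin N → ℝ)) :=
    Measure.addHaarScalarFactor_pos_of_isAddHaarMeasure ν volume
  refine ⟨_, by exact_mod_cast hc0, fun H => ?_⟩
  have h1 : ∫ x, H (b.equivFun.symm x) ∂ν = ∫ s, H s ∂μ := by
    rw [show ν = μ.map me from rfl,
      MeasureTheory.integral_map_equiv me (fun x => H (b.equivFun.symm x))]
    refine integral_congr_ae (Filter.Eventually.of_forall fun s => ?_)
    show H (b.equivFun.symm (me s)) = H s
    have : me s = b.equivFun s := rfl
    rw [this, b.equivFun.symm_apply_apply]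
  rw [← h1]
  conv_lhs => rw [huniq]
  rw [integral_smul_nnreal_measure, NNReal.smul_def, smul_eq_mul]
  rfl

lemma ward_aux (hL : 2 ≤ L) (μ : Measure (hyper d L)) [μ.IsAddHaarMeasure]
    (t : (Fin d → ZMod L) → ℝ) (i : Fin d → ZMod L)
    {N : ℕ} (b : Module.Basis (Fin N) ℝ (hyper d L))
    (hb : ∀ k l, bil t (b k) (b l) = if k = l then 1 else 0) :
    ∑ j : Fin d → ZMod L, Kmat d L μ t i j = 2 * savg d L μ t (Uloc t i) := by
  obtain ⟨c, hc, hint⟩ := integral_transport μ b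
  have hexp : ∀ x : Fin N → ℝ,
      Real.exp (-Bform t ((b.equivFun.symm x : hyper d L) : (Fin d → ZMod L) → ℝ)) = Gs x := by
    intro x
    rw [B_transport t b hb]
    rfl
  -- transported form of savg
  have hsavg : ∀ F : ((Fin d → ZMod L) → ℝ) → ℝ,
      savg d L μ t F
        = (∫ x : Fin N → ℝ,
            F ((b.equivFun.symm x : hyper d L) : (Fin d → ZMod L) → ℝ) * Gs x)
          / (∫ x : Fin N → ℝ, Gs x) := by
    intro F
    unfold savg
    rw [hint (fun s => F (s : (Fin d → ZMod L) → ℝ)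
          * Real.exp (-Bform t (s : (Fin d → ZMod L) → ℝ))),
      hint (fun s => Real.exp (-Bform t (s : (Fin d → ZMod L) → ℝ)))]
    simp only [hexp]
    rw [mul_div_mul_left _ _ (ne_of_gt hc)]
  have hU : ∀ j x, Uloc t j ((b.equivFun.symm x : hyper d L) : (Fin d → ZMod L) → ℝ)
      = qf (MUmat t b j) x := fun j x => U_transport t b j x
  have hZ : (0:ℝ) < ∫ x : Fin N → ℝ, Gs x := int_Gs_pos
  have hZ' : (∫ x : Fin N → ℝ, Gs x) ≠ 0 := ne_of_gt hZ
  -- savg of U j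
  have hUi : ∀ j, savg d L μ t (Uloc t j)
      = (∫ x : Fin N → ℝ, qf (MUmat t b j) x * Gs x) / (∫ x : Fin N → ℝ, Gs x) := by
    intro j
    rw [hsavg (Uloc t j)]
    congr 1
    refine integral_congr_ae (Filter.Eventually.of_forall fun x => ?_)
    beta_reduce
    rw [hU j x]
  -- savg of U i * U j
  have hUiUj : ∀ j, savg d L μ t (fun s => Uloc t i s * Uloc t j s)
      = (∫ x : Fin N → ℝ, qf (MUmat t b i) x * (qf (MUmat t b j) x * Gs x))
        / (∫ x : Fin N → ℝ, Gs x) := by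
    intro j
    rw [hsavg (fun s => Uloc t i s * Uloc t j s)]
    congr 1
    refine integral_congr_ae (Filter.Eventually.of_forall fun x => ?_)
    beta_reduce
    rw [hU i x, hU j x, mul_assoc]
  -- sum over j of the products
  have hsum1 : ∑ j, (∫ x : Fin N → ℝ, qf (MUmat t b i) x * (qf (MUmat t b j) x * Gs x))
      = 2 * ∫ x : Fin N → ℝ, qf (MUmat t b i) x * ((∑ m, x m ^ 2) * Gs x) := by
    rw [← integral_finset_sum _ (fun j _ => igble_qf_qf_Gs (MUmat t b i) (MUmat t b j)),
      ← integral_const_mul]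
    refine integral_congr_ae (Filter.Eventually.of_forall fun x => ?_)
    beta_reduce
    have hQ : ∑ j, qf (MUmat t b j) x = 2 * ∑ m, x m ^ 2 := by
      rw [Finset.sum_congr rfl fun j _ => (hU j x).symm, sum_Uloc, B_transport t b hb]
    calc ∑ j, qf (MUmat t b i) x * (qf (MUmat t b j) x * Gs x)
        = qf (MUmat t b i) x * ((∑ j, qf (MUmat t b j) x) * Gs x) := by
          rw [Finset.sum_mul, Finset.mul_sum]
      _ = 2 * (qf (MUmat t b i) x * ((∑ m, x m ^ 2) * Gs x)) := by rw [hQ]; ring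
  have hsum2 : ∑ j, (∫ x : Fin N → ℝ, qf (MUmat t b j) x * Gs x)
      = 2 * ∫ x : Fin N → ℝ, (∑ m, x m ^ 2) * Gs x := by
    rw [← integral_finset_sum _ (fun j _ => igble_qf_Gs (MUmat t b j)),
      ← integral_const_mul]
    refine integral_congr_ae (Filter.Eventually.of_forall fun x => ?_)
    beta_reduce
    have hQ : ∑ j, qf (MUmat t b j) x = 2 * ∑ m, x m ^ 2 := by
      rw [Finset.sum_congr rfl fun j _ => (hU j x).symm, sum_Uloc, B_transport t b hb]
    rw [← Finset.sum_mul, hQ]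
    ring
  have key := KEYM (MUmat t b i)
  -- final algebra
  rw [Finset.sum_congr rfl (fun j _ => by
      rw [Kmat, hUiUj j, hUi j, hUi i]), hUi i]
  rw [Finset.sum_sub_distrib, ← Finset.sum_div, hsum1, ← Finset.mul_sum, ← Finset.sum_div,
    hsum2]
  field_simp
  simp only [mul_assoc] at key ⊢
  linear_combination key

end assembly

/-- Ward identity: `∑_j K_{ij} = 2 ⟨U_i⟩_s`. -/
theorem K_ward_identity (d L : ℕ) [NeZero L] (hd : 1 ≤ d) (hL : 2 ≤ L)
    (μ : Measure (hyper d L)) [μ.IsAddHaarMeasure]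
    (t : (Fin d → ZMod L) → ℝ) (i : Fin d → ZMod L) :
    ∑ j : Fin d → ZMod L, Kmat d L μ t i j = 2 * savg d L μ t (Uloc t i) := by
  obtain ⟨b, hb⟩ := exists_good_basis hL t
  exact ward_aux hL μ t i b hb

end SZ
end
end

section
/- Let c > 0 and let Q be a positive semidefinite quadratic form on ℝ^{1+m} (in variables (u, v) with u ∈ ℝ, v ∈ ℝ^m) such that ∫_{ℝ^{1+m}} e^{−cu² − Q(u,v)} du dv < ∞. Then ∫ c u² e^{−cu² − Q(u,v)} du dv ≤ ½ ∫ e^{−cu² − Q(u,v)} du dv; that is, the expectation of cu² under the probability measure proportional to e^{−cu² − Q(u,v)} is at most 1/2. -/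
/-!
STATEMENT 7: For c > 0 and Q a positive semidefinite quadratic form on
ℝ^{1+m} (variables (u,v), u ∈ ℝ, v ∈ ℝ^m) with ∫ e^{−cu²−Q(u,v)} < ∞, the
expectation of cu² under the probability measure ∝ e^{−cu²−Q} is at most ½.
-/

open MeasureTheory

namespace GaussStatement7

open Real Set
open scoped ENNReal

/-- A positive continuous function that is invariant under translations by a nonzero
vector cannot be integrable for an additive Haar measure. -/
lemma not_integrable_of_shift_invariant
    {E : Type*} [NormedAddCommGroup E] [NormedSpace ℝ E] [MeasurableSpace E] [BorelSpace E]
    [FiniteDimensional ℝ E]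
    (μ : Measure E) [μ.IsAddHaarMeasure]
    {f : E → ℝ} (hcont : Continuous f) (hpos : ∀ x, 0 < f x)
    {x₀ : E} (hx₀ : x₀ ≠ 0) (hper : ∀ (x : E) (n : ℕ), f (x + (n : ℝ) • x₀) = f x) :
    ¬ Integrable f μ := by
  intro hint
  obtain ⟨g, hg1, hgx0⟩ := exists_dual_vector ℝ x₀ (norm_ne_zero_iff.mpr hx₀)
  have hgx : g x₀ = ‖x₀‖ := by exact_mod_cast hgx0
  set r : ℝ := ‖x₀‖ with hr
  have hr0 : 0 < r := norm_pos_iff.mpr hx₀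
  set S : ℕ → Set E := fun n => (fun x => g x) ⁻¹' (Ico ((n : ℝ) * r) ((n : ℝ) * r + r)) with hS
  have hmeas : ∀ n, MeasurableSet (S n) := fun n => g.continuous.measurable measurableSet_Ico
  have hdisj : Pairwise (Function.onFun Disjoint S) := by
    intro i j hij
    refine Set.disjoint_left.mpr ?_
    intro x hxi hxj
    simp only [hS, mem_preimage, mem_Ico] at hxi hxj
    rcases lt_or_gt_of_ne hij with h | h
    · have hij' : (i : ℝ) + 1 ≤ j := by exact_mod_cast h
      nlinarith [hxi.2, hxj.1]
    · have hij' : (j : ℝ) + 1 ≤ i := by exact_mod_cast h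
      nlinarith [hxj.2, hxi.1]
  set F : E → ℝ≥0∞ := fun x => ENNReal.ofReal (f x) with hF
  have hFmeas : Measurable F := ENNReal.measurable_ofReal.comp hcont.measurable
  have hkey : ∀ n : ℕ, ∫⁻ x in S n, F x ∂μ = ∫⁻ x in S 0, F x ∂μ := by
    intro n
    rw [← lintegral_indicator (hmeas n), ← lintegral_indicator (hmeas 0)]
    rw [← lintegral_add_right_eq_self (fun x => (S n).indicator F x) ((n : ℝ) • x₀)]
    congr 1
    funext x
    have hgx' : g (x + (n : ℝ) • x₀) = g x + (n : ℝ) * r := by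
      rw [map_add, g.map_smul, hgx, smul_eq_mul]
    have hmem : (x + (n : ℝ) • x₀ ∈ S n) ↔ x ∈ S 0 := by
      simp only [hS, mem_preimage, mem_Ico, hgx', Nat.cast_zero, zero_mul, zero_add]
      constructor
      · rintro ⟨h1, h2⟩; exact ⟨by linarith, by linarith⟩
      · rintro ⟨h1, h2⟩; exact ⟨by linarith, by linarith⟩
    by_cases hx : x ∈ S 0
    · rw [Set.indicator_of_mem (hmem.mpr hx), Set.indicator_of_mem hx]
      simp only [hF, hper x n]
    · rw [Set.indicator_of_notMem (fun hh => hx (hmem.mp hh)), Set.indicator_of_notMem hx]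
  have hU : 0 < μ (S 0) := by
    have hUopen : IsOpen ((fun x => g x) ⁻¹' (Ioo (0 : ℝ) r)) := isOpen_Ioo.preimage g.continuous
    have hz2 : g ((2⁻¹ : ℝ) • x₀) = 2⁻¹ * r := by rw [g.map_smul, hgx, smul_eq_mul]
    have hz : ((2⁻¹ : ℝ) • x₀) ∈ ((fun x => g x) ⁻¹' (Ioo (0 : ℝ) r)) := by
      simp only [mem_preimage, hz2, mem_Ioo]
      constructor <;> nlinarith
    have h1 : 0 < μ ((fun x => g x) ⁻¹' (Ioo (0 : ℝ) r)) := hUopen.measure_pos μ ⟨_, hz⟩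
    refine lt_of_lt_of_le h1 (measure_mono ?_)
    intro x hx
    simp only [mem_preimage, mem_Ioo] at hx
    simp only [hS, mem_preimage, mem_Ico, Nat.cast_zero, zero_mul, zero_add]
    exact ⟨le_of_lt hx.1, by linarith [hx.2]⟩
  have hpos0 : 0 < ∫⁻ x in S 0, F x ∂μ := by
    rw [lintegral_pos_iff_support hFmeas]
    have hsupp : Function.support F = univ :=
      eq_univ_of_forall fun x => by
        simp only [hF, Function.mem_support, ne_eq, ENNReal.ofReal_eq_zero, not_le]
        exact hpos x
    rw [hsupp, Measure.restrict_apply MeasurableSet.univ, univ_inter]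
    exact hU
  have hsum : ∫⁻ x in ⋃ n, S n, F x ∂μ = ∑' n : ℕ, ∫⁻ x in S n, F x ∂μ :=
    lintegral_iUnion hmeas hdisj F
  have htop : (∑' n : ℕ, ∫⁻ x in S n, F x ∂μ) = ⊤ := by
    simp_rw [hkey]
    exact ENNReal.tsum_const_eq_top_of_ne_zero hpos0.ne'
  have hfin : (∫⁻ x, F x ∂μ) < ⊤ := by
    refine lt_of_le_of_lt (lintegral_mono fun x => ?_) hint.2
    rw [← ofReal_norm]
    exact ENNReal.ofReal_le_ofReal (le_abs_self _)
  have hle : ∫⁻ x in ⋃ n, S n, F x ∂μ ≤ ∫⁻ x, F x ∂μ := setLIntegral_le_lintegral _ _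
  rw [hsum, htop] at hle
  exact absurd (lt_of_le_of_lt hle hfin) (lt_irrefl ⊤)

variable {m : ℕ}

local notation "E" => (ℝ × (Fin m → ℝ))

/-- The full exponent `Φ(x) = c x₁² + Q x`. -/
noncomputable def Phi (c : ℝ) (Q : QuadraticForm ℝ (ℝ × (Fin m → ℝ))) (x : ℝ × (Fin m → ℝ)) :
    ℝ :=
  c * x.1 ^ 2 + Q x

/-- The polar form of `Φ`. -/
noncomputable def Pf (c : ℝ) (Q : QuadraticForm ℝ (ℝ × (Fin m → ℝ))) (x y : ℝ × (Fin m → ℝ)) :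
    ℝ :=
  2 * c * x.1 * y.1 + QuadraticMap.polar (⇑Q) x y

variable (c : ℝ) (Q : QuadraticForm ℝ (ℝ × (Fin m → ℝ)))

lemma phi_expand (x y : E) (t : ℝ) :
    Phi c Q (x + t • y) = Phi c Q x + t * Pf c Q x y + t ^ 2 * Phi c Q y := by
  have h1 : Q (x + t • y) = Q x + Q (t • y) + QuadraticMap.polar (⇑Q) x (t • y) :=
    QuadraticMap.map_add Q x (t • y)
  have h2 : Q (t • y) = (t * t) • Q y := QuadraticMap.map_smul Q t y
  have h3 : QuadraticMap.polar (⇑Q) x (t • y) = t • QuadraticMap.polar (⇑Q) x y :=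
    QuadraticMap.polar_smul_right Q t x y
  have h4 : (x + t • y).1 = x.1 + t * y.1 := by
    simp [Prod.fst_add, Prod.smul_fst, smul_eq_mul]
  simp only [Phi, Pf, h1, h2, h3, h4, smul_eq_mul]
  ring

lemma phi_smul (t : ℝ) (x : E) : Phi c Q (t • x) = t ^ 2 * Phi c Q x := by
  have h2 : Q (t • x) = (t * t) • Q x := QuadraticMap.map_smul Q t x
  have h4 : (t • x).1 = t * x.1 := rfl
  simp only [Phi, h2, h4, smul_eq_mul]
  ring

variable {c Q}

lemma phi_nonneg (hc : 0 < c) (hQ : ∀ x, 0 ≤ Q x) (x : E) : 0 ≤ Phi c Q x :=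
  add_nonneg (by positivity) (hQ x)

lemma cu_sq_le_phi (hQ : ∀ x, 0 ≤ Q x) (x : E) : c * x.1 ^ 2 ≤ Phi c Q x := by
  have := hQ x; simp only [Phi]; linarith

lemma abs_le_of_sq_le {a b : ℝ} (hb : 0 ≤ b) (h : a ^ 2 ≤ b ^ 2) : |a| ≤ b := by
  nlinarith [sq_abs a, abs_nonneg a]

lemma discrim_le' {a b q : ℝ} (h : ∀ s : ℝ, 0 ≤ a + b * s + q * s ^ 2) :
    b ^ 2 ≤ 4 * a * q := by
  have h2 : discrim q b a ≤ 0 := discrim_le_zero (fun x => by have := h x; nlinarith)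
  rw [discrim] at h2
  nlinarith [h2]

lemma pf_sq_le (hc : 0 < c) (hQ : ∀ x, 0 ≤ Q x) (x y : E) :
    (Pf c Q x y) ^ 2 ≤ 4 * Phi c Q x * Phi c Q y := by
  apply discrim_le'
  intro s
  have := phi_nonneg hc hQ (x + s • y)
  rw [phi_expand] at this
  linarith

lemma polar_sq_le (hQ : ∀ x, 0 ≤ Q x) (x y : E) :
    (QuadraticMap.polar (⇑Q) x y) ^ 2 ≤ 4 * Q x * Q y := by
  apply discrim_le'
  intro s
  have h1 : Q (x + s • y) = Q x + Q (s • y) + QuadraticMap.polar (⇑Q) x (s • y) :=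
    QuadraticMap.map_add Q x (s • y)
  have h2 : Q (s • y) = (s * s) • Q y := QuadraticMap.map_smul Q s y
  have h3 : QuadraticMap.polar (⇑Q) x (s • y) = s • QuadraticMap.polar (⇑Q) x y :=
    QuadraticMap.polar_smul_right Q s x y
  have h4 := hQ (x + s • y)
  rw [h1, h2, h3] at h4
  simp only [smul_eq_mul] at h4
  nlinarith [h4]

variable (Q) in
/-- The polar bilinear form, as a linear map into continuous linear maps. -/
noncomputable def polarCLM : (ℝ × (Fin m → ℝ)) →ₗ[ℝ] ((ℝ × (Fin m → ℝ)) →L[ℝ] ℝ) :=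
  (LinearMap.toContinuousLinearMap :
    ((ℝ × (Fin m → ℝ)) →ₗ[ℝ] ℝ) ≃ₗ[ℝ] ((ℝ × (Fin m → ℝ)) →L[ℝ] ℝ)).toLinearMap.comp
    Q.polarBilin

lemma polarCLM_apply (x y : E) : polarCLM Q x y = QuadraticMap.polar (⇑Q) x y := rfl

lemma continuous_polar (y : E) : Continuous fun x : E => QuadraticMap.polar (⇑Q) x y := by
  have h1 : Continuous fun x : E => polarCLM Q x := (polarCLM Q).continuous_of_finiteDimensional
  simpa [polarCLM_apply] using h1.clm_apply continuous_const

lemma continuous_Q : Continuous fun x : E => Q x := by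
  have h1 : Continuous fun x : E => polarCLM Q x := (polarCLM Q).continuous_of_finiteDimensional
  have h2 : Continuous fun x : E => polarCLM Q x x := h1.clm_apply continuous_id
  have h3 : ∀ x : E, Q x = polarCLM Q x x / 2 := by
    intro x
    rw [polarCLM_apply, QuadraticMap.polar_self]
    push_cast
    ring
  simpa [← h3] using h2.div_const 2

lemma continuous_phi : Continuous fun x : E => Phi c Q x := by
  unfold Phi
  exact (continuous_const.mul (continuous_fst.pow 2)).add continuous_Q

lemma continuous_pf (y : E) : Continuous fun x : E => Pf c Q x y := by
  unfold Pf
  exact ((continuous_const.mul continuous_fst).mul continuous_const).add (continuous_polar y)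

instance : (volume : Measure (ℝ × (Fin m → ℝ))).IsAddHaarMeasure := by
  rw [MeasureTheory.Measure.volume_eq_prod]; infer_instance

instance : (volume : Measure (ℝ × (Fin m → ℝ))).IsAddRightInvariant := by
  rw [MeasureTheory.Measure.volume_eq_prod]; infer_instance

lemma integrable_exp_scaled (hint : Integrable fun x : E => exp (-Phi c Q x)) {s : ℝ}
    (hs : 0 < s) : Integrable fun x : E => exp (-(s * Phi c Q x)) := by
  have hss : Real.sqrt s ≠ 0 := by positivity
  have h1 : Integrable fun x : E => exp (-Phi c Q (Real.sqrt s • x)) := hint.comp_smul hss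
  refine h1.congr (Filter.Eventually.of_forall fun x => ?_)
  simp only []
  rw [phi_smul, Real.sq_sqrt hs.le]

lemma poly_exp_key : ∀ t : ℝ, 0 ≤ t →
    (1 + t) ^ 3 * exp (-(3 / 4 * t)) ≤ 216 * exp (-(1 / 4 * t)) := by
  intro t ht
  have e1 : 1 + t ≤ 6 * exp (t / 6) := by nlinarith [Real.add_one_le_exp (t / 6)]
  have e2 : (1 + t) ^ 3 ≤ (6 * exp (t / 6)) ^ 3 := by
    apply pow_le_pow_left₀ (by linarith) e1
  have e3 : (6 * exp (t / 6)) ^ 3 = 216 * exp (t / 2) := by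
    rw [mul_pow, ← Real.exp_nat_mul]
    norm_num
    ring_nf
  calc (1 + t) ^ 3 * exp (-(3 / 4 * t)) ≤ (216 * exp (t / 2)) * exp (-(3 / 4 * t)) := by
        apply mul_le_mul_of_nonneg_right _ (exp_pos _).le
        rw [← e3]; exact e2
    _ = 216 * (exp (t / 2) * exp (-(3 / 4 * t))) := by ring
    _ = 216 * exp (-(1 / 4 * t)) := by rw [← Real.exp_add]; ring_nf

lemma integrable_dom {G : Type*} [NormedAddCommGroup G] (hc : 0 < c) (hQ : ∀ x, 0 ≤ Q x)
    (hint : Integrable fun x : E => exp (-Phi c Q x))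
    {f : E → G} (hmeas : AEStronglyMeasurable f volume) {C : ℝ}
    (hbound : ∀ x, ‖f x‖ ≤ C * ((1 + Phi c Q x) ^ 3 * exp (-(3 / 4 * Phi c Q x)))) :
    Integrable f := by
  refine Integrable.mono (g := fun x => (216 * |C|) * exp (-(1 / 4 * Phi c Q x)))
    ((integrable_exp_scaled hint (by norm_num)).const_mul _) hmeas
    (Filter.Eventually.of_forall fun x => ?_)
  have h0 : 0 ≤ Phi c Q x := phi_nonneg hc hQ x
  have h2 := poly_exp_key (Phi c Q x) h0
  rw [Real.norm_eq_abs, abs_of_nonneg (by positivity)]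
  calc ‖f x‖ ≤ C * ((1 + Phi c Q x) ^ 3 * exp (-(3 / 4 * Phi c Q x))) := hbound x
    _ ≤ |C| * ((1 + Phi c Q x) ^ 3 * exp (-(3 / 4 * Phi c Q x))) := by
        apply mul_le_mul_of_nonneg_right (le_abs_self C) (by positivity)
    _ ≤ |C| * (216 * exp (-(1 / 4 * Phi c Q x))) := by
        apply mul_le_mul_of_nonneg_left h2 (abs_nonneg C)
    _ = (216 * |C|) * exp (-(1 / 4 * Phi c Q x)) := by ring

lemma abs_fst_le (hc : 0 < c) (hQ : ∀ x, 0 ≤ Q x) (x : E) :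
    |x.1| ≤ (1 + 1 / c) * (1 + Phi c Q x) := by
  have h0 : 0 ≤ Phi c Q x := phi_nonneg hc hQ x
  have h1 : c * x.1 ^ 2 ≤ Phi c Q x := cu_sq_le_phi hQ x
  have hd0 : 0 < 1 / c := by positivity
  have hd : c * (1 / c) = 1 := by field_simp
  nlinarith [sq_abs x.1, sq_nonneg (|x.1| - 1), abs_nonneg x.1,
    mul_le_mul_of_nonneg_left h1 hd0.le]

lemma abs_pf_le (hc : 0 < c) (hQ : ∀ x, 0 ≤ Q x) (x y : E) :
    |Pf c Q x y| ≤ (1 + Phi c Q y) * (1 + Phi c Q x) := by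
  have h0 : 0 ≤ Phi c Q x := phi_nonneg hc hQ x
  have hq0 : 0 ≤ Phi c Q y := phi_nonneg hc hQ y
  refine abs_le_of_sq_le (by positivity) ?_
  nlinarith [pf_sq_le hc hQ x y, sq_nonneg (Phi c Q x - Phi c Q y),
    mul_nonneg h0 hq0, sq_nonneg (1 + Phi c Q x), sq_nonneg (1 + Phi c Q y)]

lemma abs_polar_le (hc : 0 < c) (hQ : ∀ x, 0 ≤ Q x) (x y : E) :
    |QuadraticMap.polar (⇑Q) x y| ≤ (1 + Phi c Q y) * (1 + Phi c Q x) := by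
  have h0 : 0 ≤ Phi c Q x := phi_nonneg hc hQ x
  have hq0 : 0 ≤ Phi c Q y := phi_nonneg hc hQ y
  have e1 : Q x ≤ Phi c Q x := by have := sq_nonneg x.1; simp only [Phi]; nlinarith
  have e2 : Q y ≤ Phi c Q y := by have := sq_nonneg y.1; simp only [Phi]; nlinarith
  have e3 : 4 * Q x * Q y ≤ 4 * Phi c Q x * Phi c Q y := by nlinarith [hQ x, hQ y]
  refine abs_le_of_sq_le (by positivity) ?_
  nlinarith [polar_sq_le hQ x y, e3, sq_nonneg (Phi c Q x - Phi c Q y),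
    mul_nonneg h0 hq0, sq_nonneg (1 + Phi c Q x), sq_nonneg (1 + Phi c Q y)]

lemma cube_ge_one {t : ℝ} (ht : 0 ≤ t) : (1 + t) ≤ (1 + t) ^ 3 := by
  nlinarith [sq_nonneg t, pow_nonneg ht 3]

lemma cube_ge_sq {t : ℝ} (ht : 0 ≤ t) : (1 + t) ^ 2 ≤ (1 + t) ^ 3 := by
  nlinarith [sq_nonneg t, pow_nonneg ht 3, sq_nonneg (1 + t)]

lemma exp_phi_le (hc : 0 < c) (hQ : ∀ x, 0 ≤ Q x) (x : E) :
    exp (-Phi c Q x) ≤ exp (-(3 / 4 * Phi c Q x)) :=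
  exp_le_exp.mpr (by linarith [phi_nonneg hc hQ x])

lemma integrable_xsq (hc : 0 < c) (hQ : ∀ x, 0 ≤ Q x)
    (hint : Integrable fun x : E => exp (-Phi c Q x)) :
    Integrable fun x : E => x.1 ^ 2 * exp (-Phi c Q x) := by
  refine integrable_dom hc hQ hint (Continuous.aestronglyMeasurable ?_) (C := 1 / c) ?_
  · exact (continuous_fst.pow 2).mul (continuous_phi.neg.rexp)
  intro x
  have h0 : 0 ≤ Phi c Q x := phi_nonneg hc hQ x
  have h1 : c * x.1 ^ 2 ≤ Phi c Q x := cu_sq_le_phi hQ x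
  have hcube : Phi c Q x ≤ (1 + Phi c Q x) ^ 3 := by
    nlinarith [sq_nonneg (Phi c Q x), pow_nonneg h0 3]
  have h6 : x.1 ^ 2 ≤ 1 / c * (1 + Phi c Q x) ^ 3 := by
    rw [one_div, inv_mul_eq_div, le_div_iff₀ hc]
    nlinarith
  rw [Real.norm_eq_abs, abs_of_nonneg (by positivity)]
  calc x.1 ^ 2 * exp (-Phi c Q x) ≤ x.1 ^ 2 * exp (-(3 / 4 * Phi c Q x)) :=
        mul_le_mul_of_nonneg_left (exp_phi_le hc hQ x) (sq_nonneg _)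
    _ ≤ (1 / c * (1 + Phi c Q x) ^ 3) * exp (-(3 / 4 * Phi c Q x)) :=
        mul_le_mul_of_nonneg_right h6 (exp_pos _).le
    _ = 1 / c * ((1 + Phi c Q x) ^ 3 * exp (-(3 / 4 * Phi c Q x))) := by ring

lemma integrable_fst (hc : 0 < c) (hQ : ∀ x, 0 ≤ Q x)
    (hint : Integrable fun x : E => exp (-Phi c Q x)) :
    Integrable fun x : E => x.1 * exp (-Phi c Q x) := by
  refine integrable_dom hc hQ hint (Continuous.aestronglyMeasurable ?_) (C := 1 + 1 / c) ?_
  · exact continuous_fst.mul (continuous_phi.neg.rexp)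
  intro x
  have h0 : 0 ≤ Phi c Q x := phi_nonneg hc hQ x
  rw [Real.norm_eq_abs, abs_mul, Real.abs_exp]
  calc |x.1| * exp (-Phi c Q x)
      ≤ ((1 + 1 / c) * (1 + Phi c Q x)) * exp (-(3 / 4 * Phi c Q x)) :=
        mul_le_mul (abs_fst_le hc hQ x) (exp_phi_le hc hQ x) (exp_pos _).le (by positivity)
    _ ≤ ((1 + 1 / c) * (1 + Phi c Q x) ^ 3) * exp (-(3 / 4 * Phi c Q x)) := by
        apply mul_le_mul_of_nonneg_right _ (exp_pos _).le
        apply mul_le_mul_of_nonneg_left (cube_ge_one h0) (by positivity)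
    _ = (1 + 1 / c) * ((1 + Phi c Q x) ^ 3 * exp (-(3 / 4 * Phi c Q x))) := by ring

lemma integrable_fst_pf (hc : 0 < c) (hQ : ∀ x, 0 ≤ Q x)
    (hint : Integrable fun x : E => exp (-Phi c Q x)) (y : E) :
    Integrable fun x : E => x.1 * Pf c Q x y * exp (-Phi c Q x) := by
  refine integrable_dom hc hQ hint (Continuous.aestronglyMeasurable ?_)
    (C := (1 + 1 / c) * (1 + Phi c Q y)) ?_
  · exact (continuous_fst.mul (continuous_pf y)).mul (continuous_phi.neg.rexp)
  intro x
  have h0 : 0 ≤ Phi c Q x := phi_nonneg hc hQ x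
  have hq0 : 0 ≤ Phi c Q y := phi_nonneg hc hQ y
  have hw : |x.1| * |Pf c Q x y| ≤ ((1 + 1 / c) * (1 + Phi c Q y)) * (1 + Phi c Q x) ^ 2 := by
    nlinarith [mul_le_mul (abs_fst_le hc hQ x) (abs_pf_le hc hQ x y) (abs_nonneg _)
      (by positivity : (0:ℝ) ≤ (1 + 1 / c) * (1 + Phi c Q x))]
  rw [Real.norm_eq_abs, abs_mul, Real.abs_exp, abs_mul]
  calc |x.1| * |Pf c Q x y| * exp (-Phi c Q x)
      ≤ (((1 + 1 / c) * (1 + Phi c Q y)) * (1 + Phi c Q x) ^ 2) * exp (-(3 / 4 * Phi c Q x)) :=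
        mul_le_mul hw (exp_phi_le hc hQ x) (exp_pos _).le (by positivity)
    _ ≤ (((1 + 1 / c) * (1 + Phi c Q y)) * (1 + Phi c Q x) ^ 3) * exp (-(3 / 4 * Phi c Q x)) := by
        apply mul_le_mul_of_nonneg_right _ (exp_pos _).le
        apply mul_le_mul_of_nonneg_left (cube_ge_sq h0) (by positivity)
    _ = ((1 + 1 / c) * (1 + Phi c Q y)) *
        ((1 + Phi c Q x) ^ 3 * exp (-(3 / 4 * Phi c Q x))) := by ring

lemma integrable_fst_polar (hc : 0 < c) (hQ : ∀ x, 0 ≤ Q x)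
    (hint : Integrable fun x : E => exp (-Phi c Q x)) (y : E) :
    Integrable fun x : E => x.1 * QuadraticMap.polar (⇑Q) x y * exp (-Phi c Q x) := by
  refine integrable_dom hc hQ hint (Continuous.aestronglyMeasurable ?_)
    (C := (1 + 1 / c) * (1 + Phi c Q y)) ?_
  · exact (continuous_fst.mul (continuous_polar y)).mul (continuous_phi.neg.rexp)
  intro x
  have h0 : 0 ≤ Phi c Q x := phi_nonneg hc hQ x
  have hq0 : 0 ≤ Phi c Q y := phi_nonneg hc hQ y
  have hw : |x.1| * |QuadraticMap.polar (⇑Q) x y|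
      ≤ ((1 + 1 / c) * (1 + Phi c Q y)) * (1 + Phi c Q x) ^ 2 := by
    nlinarith [mul_le_mul (abs_fst_le hc hQ x) (abs_polar_le hc hQ x y) (abs_nonneg _)
      (by positivity : (0:ℝ) ≤ (1 + 1 / c) * (1 + Phi c Q x))]
  rw [Real.norm_eq_abs, abs_mul, Real.abs_exp, abs_mul]
  calc |x.1| * |QuadraticMap.polar (⇑Q) x y| * exp (-Phi c Q x)
      ≤ (((1 + 1 / c) * (1 + Phi c Q y)) * (1 + Phi c Q x) ^ 2) * exp (-(3 / 4 * Phi c Q x)) :=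
        mul_le_mul hw (exp_phi_le hc hQ x) (exp_pos _).le (by positivity)
    _ ≤ (((1 + 1 / c) * (1 + Phi c Q y)) * (1 + Phi c Q x) ^ 3) * exp (-(3 / 4 * Phi c Q x)) := by
        apply mul_le_mul_of_nonneg_right _ (exp_pos _).le
        apply mul_le_mul_of_nonneg_left (cube_ge_sq h0) (by positivity)
    _ = ((1 + 1 / c) * (1 + Phi c Q y)) *
        ((1 + Phi c Q x) ^ 3 * exp (-(3 / 4 * Phi c Q x))) := by ring

set_option maxHeartbeats 1000000 in
/-- The key "integration by parts" identity, proved by differentiating a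
translation-invariance identity. -/
lemma key_identity (hc : 0 < c) (hQ : ∀ x, 0 ≤ Q x)
    (hint : Integrable fun x : E => exp (-Phi c Q x)) (y : E) :
    ∫ x : E, x.1 * Pf c Q x y * exp (-Phi c Q x)
      = y.1 * ∫ x : E, exp (-Phi c Q x) := by
  set I : ℝ := ∫ x : E, exp (-Phi c Q x) with hI
  set J : ℝ := ∫ x : E, x.1 * exp (-Phi c Q x) with hJ
  set q : ℝ := Phi c Q y with hqdef
  have hq0 : 0 ≤ q := phi_nonneg hc hQ y
  set G : ℝ → E → ℝ :=
    fun t x => x.1 * exp (-(Phi c Q x + t * Pf c Q x y + t ^ 2 * q)) with hG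
  -- Step A: exact formula via translation invariance
  have hformula : ∀ t : ℝ, (∫ x : E, G t x) = J - t * (y.1 * I) := by
    intro t
    have hpt : (fun x : E => G t x) = fun x : E =>
        (fun z : E => z.1 * exp (-Phi c Q z)) (x + t • y)
          - (t * y.1) * exp (-Phi c Q (x + t • y)) := by
      funext x
      simp only [hG]
      rw [phi_expand c Q x y t]
      have h4 : (x + t • y).1 = x.1 + t * y.1 := rfl
      rw [h4]
      ring
    have hint1 : Integrable fun x : E =>
        (fun z : E => z.1 * exp (-Phi c Q z)) (x + t • y) :=
      (integrable_fst hc hQ hint).comp_add_right (t • y)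
    have hint2 : Integrable fun x : E => exp (-Phi c Q (x + t • y)) :=
      hint.comp_add_right (t • y)
    rw [hpt, integral_sub hint1 (hint2.const_mul (t * y.1)), integral_const_mul,
      integral_add_right_eq_self (fun z : E => z.1 * exp (-Phi c Q z)) (t • y),
      integral_add_right_eq_self (fun z : E => exp (-Phi c Q z)) (t • y)]
    rw [← hJ, ← hI]
    ring
  -- Step B: hence the derivative at 0 equals -(y.1 * I)
  have hderiv1 : HasDerivAt (fun t : ℝ => ∫ x : E, G t x) (-(y.1 * I)) 0 := by
    have heq : (fun t : ℝ => ∫ x : E, G t x) = fun t : ℝ => J - t * (y.1 * I) := by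
      funext t; exact hformula t
    rw [heq]
    simpa using (hasDerivAt_mul_const (y.1 * I)).const_sub J
  -- Step C: derivative via dominated convergence
  set ε : ℝ := 1 / (2 * (1 + q)) with hε
  have hε0 : 0 < ε := by positivity
  have hεq : ε * (1 + q) = 1 / 2 := by rw [hε]; field_simp
  set G' : ℝ → E → ℝ := fun t x =>
    x.1 * (-(Pf c Q x y + 2 * t * q)) * exp (-(Phi c Q x + t * Pf c Q x y + t ^ 2 * q))
    with hG'
  set C : ℝ := Real.exp 1 * ((1 + 1 / c) * (2 + q)) with hC
  set bound : E → ℝ := fun x =>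
    C * ((1 + Phi c Q x) ^ 3 * exp (-(3 / 4 * Phi c Q x))) with hbound
  have hcontG : ∀ t : ℝ, Continuous (G t) := by
    intro t
    apply continuous_fst.mul
    exact (((continuous_phi.add (continuous_const.mul (continuous_pf y))).add
      continuous_const).neg).rexp
  have hGmeas : ∀ᶠ t in nhds (0 : ℝ), AEStronglyMeasurable (G t) volume :=
    Filter.Eventually.of_forall fun t => (hcontG t).aestronglyMeasurable
  have hGint : Integrable (G 0) := by
    have heq0 : G 0 = fun x : E => x.1 * exp (-Phi c Q x) := by
      funext x; simp [hG]
    rw [heq0]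
    exact integrable_fst hc hQ hint
  have hG'meas : AEStronglyMeasurable (G' 0) volume := by
    apply Continuous.aestronglyMeasurable
    apply Continuous.mul
    · exact continuous_fst.mul
        (((continuous_pf y).add (continuous_const.mul continuous_const)).neg)
    · exact (((continuous_phi.add (continuous_const.mul (continuous_pf y))).add
        continuous_const).neg).rexp
  have hbound_int : Integrable bound := by
    refine integrable_dom hc hQ hint (Continuous.aestronglyMeasurable ?_) (C := C)
      (fun x => ?_)
    · apply continuous_const.mul
      apply Continuous.mul
      · exact (continuous_const.add continuous_phi).pow 3
      · exact ((continuous_const.mul continuous_phi).neg).rexp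
    · have h0 : 0 ≤ Phi c Q x := phi_nonneg hc hQ x
      have hC0 : 0 ≤ C := by
        rw [hC]; positivity
      have hnn : 0 ≤ bound x := by
        apply mul_nonneg hC0
        exact mul_nonneg (pow_nonneg (by linarith) 3) (exp_pos _).le
      rw [Real.norm_eq_abs, abs_of_nonneg hnn]
  have h_bound : ∀ᵐ x ∂(volume : Measure E),
      ∀ t ∈ Metric.ball (0 : ℝ) ε, ‖G' t x‖ ≤ bound x := by
    refine Filter.Eventually.of_forall fun x => fun t ht => ?_
    have h0 : 0 ≤ Phi c Q x := phi_nonneg hc hQ x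
    have hp2 : (Pf c Q x y) ^ 2 ≤ 4 * Phi c Q x * q := pf_sq_le hc hQ x y
    have htle : |t| ≤ ε := by
      rw [Metric.mem_ball, Real.dist_eq, sub_zero] at ht
      exact ht.le
    have ht2 : t ^ 2 ≤ ε ^ 2 := by nlinarith [sq_abs t, abs_nonneg t]
    have he2 : ε ^ 2 * (4 * q) ≤ 1 := by
      have hεsq : (ε * (1 + q)) ^ 2 = (1 / 2 : ℝ) ^ 2 := by rw [hεq]
      nlinarith [hεsq, sq_nonneg ε, hq0, mul_nonneg (sq_nonneg ε) hq0,
        mul_nonneg (mul_nonneg (sq_nonneg ε) hq0) hq0]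
    have h1 : (t * Pf c Q x y) ^ 2 ≤ Phi c Q x := by
      calc (t * Pf c Q x y) ^ 2 = t ^ 2 * (Pf c Q x y) ^ 2 := by ring
        _ ≤ ε ^ 2 * (4 * Phi c Q x * q) := by
            nlinarith [sq_nonneg (Pf c Q x y), sq_nonneg t, sq_nonneg ε]
        _ = (ε ^ 2 * (4 * q)) * Phi c Q x := by ring
        _ ≤ 1 * Phi c Q x := mul_le_mul_of_nonneg_right he2 h0
        _ = Phi c Q x := one_mul _
    have htp : |t * Pf c Q x y| ≤ Phi c Q x / 4 + 1 := by
      refine abs_le_of_sq_le (by positivity) ?_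
      nlinarith [h1, sq_nonneg (Phi c Q x / 4 - 1)]
    have hexpA : exp (-(Phi c Q x + t * Pf c Q x y + t ^ 2 * q))
        ≤ Real.exp 1 * exp (-(3 / 4 * Phi c Q x)) := by
      rw [← Real.exp_add]
      apply exp_le_exp.mpr
      have hng : -(t * Pf c Q x y) ≤ |t * Pf c Q x y| := neg_le_abs _
      have hsq : 0 ≤ t ^ 2 * q := mul_nonneg (sq_nonneg t) hq0
      linarith
    have h2tq : |2 * t * q| ≤ 1 := by
      have : |2 * t * q| = 2 * |t| * q := by
        rw [abs_mul, abs_mul, abs_two, abs_of_nonneg hq0]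
      rw [this]
      nlinarith [htle, hεq, hq0, hε0.le, abs_nonneg t]
    have hptq : |(-(Pf c Q x y + 2 * t * q))| ≤ (2 + q) * (1 + Phi c Q x) := by
      rw [abs_neg]
      calc |Pf c Q x y + 2 * t * q| ≤ |Pf c Q x y| + |2 * t * q| := abs_add_le _ _
        _ ≤ (1 + q) * (1 + Phi c Q x) + 1 := by
            have := abs_pf_le hc hQ x y
            rw [← hqdef] at this
            linarith [h2tq, this]
        _ ≤ (2 + q) * (1 + Phi c Q x) := by nlinarith [h0, hq0]
    have hwt : |x.1| * |(-(Pf c Q x y + 2 * t * q))|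
        ≤ ((1 + 1 / c) * (1 + Phi c Q x)) * ((2 + q) * (1 + Phi c Q x)) :=
      mul_le_mul (abs_fst_le hc hQ x) hptq (abs_nonneg _)
        (mul_nonneg (by positivity) (by linarith))
    simp only [hG']
    rw [Real.norm_eq_abs, abs_mul, abs_mul, Real.abs_exp]
    calc |x.1| * |(-(Pf c Q x y + 2 * t * q))|
          * exp (-(Phi c Q x + t * Pf c Q x y + t ^ 2 * q))
        ≤ (((1 + 1 / c) * (1 + Phi c Q x)) * ((2 + q) * (1 + Phi c Q x)))
            * (Real.exp 1 * exp (-(3 / 4 * Phi c Q x))) := by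
          apply mul_le_mul hwt hexpA (exp_pos _).le
          have hh1 : (0:ℝ) ≤ (1 + 1 / c) * (1 + Phi c Q x) := by
            apply mul_nonneg (by positivity); linarith
          have hh2 : (0:ℝ) ≤ (2 + q) * (1 + Phi c Q x) := by
            apply mul_nonneg (by linarith); linarith
          exact mul_nonneg hh1 hh2
      _ = (Real.exp 1 * ((1 + 1 / c) * (2 + q)))
            * ((1 + Phi c Q x) ^ 2 * exp (-(3 / 4 * Phi c Q x))) := by ring
      _ ≤ (Real.exp 1 * ((1 + 1 / c) * (2 + q)))
            * ((1 + Phi c Q x) ^ 3 * exp (-(3 / 4 * Phi c Q x))) := by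
          apply mul_le_mul_of_nonneg_left _ (by positivity)
          exact mul_le_mul_of_nonneg_right (cube_ge_sq h0) (exp_pos _).le
      _ = bound x := by simp only [hbound, hC]
  have h_diff : ∀ᵐ x ∂(volume : Measure E),
      ∀ t ∈ Metric.ball (0 : ℝ) ε, HasDerivAt (fun u => G u x) (G' t x) t := by
    refine Filter.Eventually.of_forall fun x => fun t _ => ?_
    have h1 : HasDerivAt (fun u : ℝ => Phi c Q x + u * Pf c Q x y + u ^ 2 * q)
        (Pf c Q x y + 2 * t * q) t := by
      have ha : HasDerivAt (fun u : ℝ => u * Pf c Q x y) (Pf c Q x y) t :=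
        hasDerivAt_mul_const _
      have hb : HasDerivAt (fun u : ℝ => u ^ 2 * q) (2 * t * q) t := by
        have := (hasDerivAt_pow 2 t).mul_const q
        simpa [pow_one] using this
      exact (ha.const_add (Phi c Q x)).add hb
    have h2 := ((h1.neg).exp).const_mul x.1
    refine HasDerivAt.congr_deriv h2 ?_
    simp only [hG', Pi.neg_apply]
    ring
  obtain ⟨-, hD⟩ := hasDerivAt_integral_of_dominated_loc_of_deriv_le (Metric.ball_mem_nhds 0 hε0) hGmeas hGint
    hG'meas h_bound hbound_int h_diff
  have huniq : (∫ x : E, G' 0 x) = -(y.1 * I) := hD.unique hderiv1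
  have hneg : (∫ x : E, G' 0 x)
      = -∫ x : E, x.1 * Pf c Q x y * exp (-Phi c Q x) := by
    rw [← integral_neg]
    congr 1
    funext x
    simp only [hG']
    ring_nf
  rw [hneg] at huniq
  have := neg_injective huniq
  rw [this]


lemma phi_posdef (hc : 0 < c) (hQ : ∀ x, 0 ≤ Q x)
    (hint : Integrable fun x : E => exp (-Phi c Q x)) {x : E} (hx : x ≠ 0) :
    0 < Phi c Q x := by
  rcases (phi_nonneg hc hQ x).lt_or_eq with h | h
  · exact h
  exfalso
  have h0 : Phi c Q x = 0 := h.symm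
  have hPzero : ∀ z : E, Pf c Q z x = 0 := by
    intro z
    have h1 := pf_sq_le hc hQ z x
    rw [h0, mul_zero] at h1
    have h2 : (Pf c Q z x) ^ 2 = 0 := le_antisymm h1 (sq_nonneg _)
    exact pow_eq_zero_iff two_ne_zero |>.mp h2
  have hinv : ∀ (z : E) (t : ℝ), Phi c Q (z + t • x) = Phi c Q z := by
    intro z t
    rw [phi_expand, hPzero, h0]
    ring
  refine not_integrable_of_shift_invariant volume (continuous_phi.neg.rexp)
    (fun z => exp_pos _) hx ?_ hint
  intro z n
  show exp (-Phi c Q (z + (n : ℝ) • x)) = exp (-Phi c Q z)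
  rw [hinv]

lemma exists_coercive (hc : 0 < c) (hQ : ∀ x, 0 ≤ Q x)
    (hint : Integrable fun x : E => exp (-Phi c Q x)) :
    ∃ δ : ℝ, 0 < δ ∧ ∀ x : E, δ * ‖x‖ ^ 2 ≤ Phi c Q x := by
  have hsne : (Metric.sphere (0 : E) 1).Nonempty := by
    refine ⟨((1 : ℝ), 0), ?_⟩
    rw [mem_sphere_zero_iff_norm, Prod.norm_def]
    simp
  obtain ⟨z, hz, hzmin⟩ :=
    (isCompact_sphere (0 : E) 1).exists_isMinOn hsne continuous_phi.continuousOn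
  have hz1 : ‖z‖ = 1 := mem_sphere_zero_iff_norm.mp hz
  have hz0 : z ≠ 0 := by
    intro h
    rw [h, norm_zero] at hz1
    norm_num at hz1
  refine ⟨Phi c Q z, phi_posdef hc hQ hint hz0, ?_⟩
  intro x
  rcases eq_or_ne x 0 with rfl | hx
  · have : Phi c Q 0 = 0 := by simp [Phi, QuadraticMap.map_zero]
    rw [this, norm_zero]
    norm_num
  · have hn : 0 < ‖x‖ := norm_pos_iff.mpr hx
    have hmem : (‖x‖⁻¹ • x) ∈ Metric.sphere (0 : E) 1 := by
      rw [mem_sphere_zero_iff_norm, norm_smul, norm_inv, norm_norm]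
      field_simp
    have hmin : Phi c Q z ≤ Phi c Q (‖x‖⁻¹ • x) := hzmin hmem
    rw [phi_smul] at hmin
    have h2 : (‖x‖⁻¹) ^ 2 * ‖x‖ ^ 2 = 1 := by field_simp
    calc Phi c Q z * ‖x‖ ^ 2 ≤ ((‖x‖⁻¹) ^ 2 * Phi c Q x) * ‖x‖ ^ 2 :=
          mul_le_mul_of_nonneg_right hmin (sq_nonneg _)
      _ = ((‖x‖⁻¹) ^ 2 * ‖x‖ ^ 2) * Phi c Q x := by ring
      _ = Phi c Q x := by rw [h2, one_mul]

lemma integrable_vec (hc : 0 < c) (hQ : ∀ x, 0 ≤ Q x)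
    (hint : Integrable fun x : E => exp (-Phi c Q x)) :
    Integrable fun x : E => (x.1 * exp (-Phi c Q x)) • x := by
  obtain ⟨δ, hδ0, hδ⟩ := exists_coercive hc hQ hint
  refine integrable_dom hc hQ hint (Continuous.aestronglyMeasurable ?_)
    (C := (1 + 1 / c) * (1 + 1 / δ)) ?_
  · exact (continuous_fst.mul (continuous_phi.neg.rexp)).smul continuous_id
  intro x
  have h0 : 0 ≤ Phi c Q x := phi_nonneg hc hQ x
  have hd0 : 0 < 1 / δ := by positivity
  have hd : δ * (1 / δ) = 1 := by field_simp
  have hnorm : ‖x‖ ≤ (1 + 1 / δ) * (1 + Phi c Q x) := by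
    have h1 : δ * ‖x‖ ^ 2 ≤ Phi c Q x := hδ x
    nlinarith [sq_nonneg (‖x‖ - 1), norm_nonneg x,
      mul_le_mul_of_nonneg_left h1 hd0.le]
  have hw : |x.1| * ‖x‖ ≤ ((1 + 1 / c) * (1 + 1 / δ)) * (1 + Phi c Q x) ^ 2 := by
    nlinarith [mul_le_mul (abs_fst_le hc hQ x) hnorm (norm_nonneg x)
      (by positivity : (0:ℝ) ≤ (1 + 1 / c) * (1 + Phi c Q x))]
  rw [norm_smul, Real.norm_eq_abs, abs_mul, Real.abs_exp]
  calc |x.1| * exp (-Phi c Q x) * ‖x‖ = (|x.1| * ‖x‖) * exp (-Phi c Q x) := by ring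
    _ ≤ (((1 + 1 / c) * (1 + 1 / δ)) * (1 + Phi c Q x) ^ 2) * exp (-(3 / 4 * Phi c Q x)) :=
        mul_le_mul hw (exp_phi_le hc hQ x) (exp_pos _).le (by positivity)
    _ ≤ (((1 + 1 / c) * (1 + 1 / δ)) * (1 + Phi c Q x) ^ 3) * exp (-(3 / 4 * Phi c Q x)) := by
        apply mul_le_mul_of_nonneg_right _ (exp_pos _).le
        apply mul_le_mul_of_nonneg_left (cube_ge_sq h0) (by positivity)
    _ = ((1 + 1 / c) * (1 + 1 / δ)) *
        ((1 + Phi c Q x) ^ 3 * exp (-(3 / 4 * Phi c Q x))) := by ring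

end GaussStatement7

open GaussStatement7 in
theorem gaussian_quadratic_expectation_le_half
    (m : ℕ) (c : ℝ) (hc : 0 < c)
    (Q : QuadraticForm ℝ (ℝ × (Fin m → ℝ))) (hQ : ∀ x, 0 ≤ Q x)
    (hint : Integrable (fun x : ℝ × (Fin m → ℝ) => Real.exp (- (c * x.1 ^ 2) - Q x))) :
    ∫ x : ℝ × (Fin m → ℝ), c * x.1 ^ 2 * Real.exp (- (c * x.1 ^ 2) - Q x)
      ≤ (1 / 2) * ∫ x : ℝ × (Fin m → ℝ), Real.exp (- (c * x.1 ^ 2) - Q x) := by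
  have hrw : ∀ x : ℝ × (Fin m → ℝ), - (c * x.1 ^ 2) - Q x = -Phi c Q x := by
    intro x; simp only [Phi]; ring
  have hint' : Integrable fun x : ℝ × (Fin m → ℝ) => Real.exp (-Phi c Q x) := by
    refine hint.congr (Filter.Eventually.of_forall fun x => ?_)
    simp only []
    rw [hrw]
  have hvec := integrable_vec hc hQ hint'
  set I : ℝ := ∫ x : ℝ × (Fin m → ℝ), Real.exp (-Phi c Q x) with hI
  set K : ℝ := ∫ x : ℝ × (Fin m → ℝ), x.1 ^ 2 * Real.exp (-Phi c Q x) with hK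
  set Y : ℝ × (Fin m → ℝ) := ∫ x : ℝ × (Fin m → ℝ), (x.1 * Real.exp (-Phi c Q x)) • x with hY
  have hI0 : 0 ≤ I := integral_nonneg fun x => (Real.exp_pos _).le
  have hK0 : 0 ≤ K := integral_nonneg fun x => mul_nonneg (sq_nonneg _) (Real.exp_pos _).le
  have hY1 : K = Y.1 := by
    have h1 : ∫ x : ℝ × (Fin m → ℝ),
        (ContinuousLinearMap.fst ℝ ℝ (Fin m → ℝ)) ((x.1 * Real.exp (-Phi c Q x)) • x)
          = (ContinuousLinearMap.fst ℝ ℝ (Fin m → ℝ)) Y :=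
      (ContinuousLinearMap.fst ℝ ℝ (Fin m → ℝ)).integral_comp_comm hvec
    have h2 : ∀ x : ℝ × (Fin m → ℝ),
        x.1 ^ 2 * Real.exp (-Phi c Q x)
          = (ContinuousLinearMap.fst ℝ ℝ (Fin m → ℝ)) ((x.1 * Real.exp (-Phi c Q x)) • x) := by
      intro x
      simp only [ContinuousLinearMap.coe_fst', Prod.smul_fst, smul_eq_mul]
      ring
    have h3 : (ContinuousLinearMap.fst ℝ ℝ (Fin m → ℝ)) Y = Y.1 := rfl
    rw [hK, integral_congr_ae (Filter.Eventually.of_forall h2), h1, h3]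
  have hκ : ∫ x : ℝ × (Fin m → ℝ),
      x.1 * QuadraticMap.polar (⇑Q) x Y * Real.exp (-Phi c Q x)
        = QuadraticMap.polar (⇑Q) Y Y := by
    have h1 : ∫ x : ℝ × (Fin m → ℝ), (polarCLM Q Y) ((x.1 * Real.exp (-Phi c Q x)) • x)
        = (polarCLM Q Y) Y :=
      (polarCLM Q Y).integral_comp_comm hvec
    have h2 : ∀ x : ℝ × (Fin m → ℝ),
        x.1 * QuadraticMap.polar (⇑Q) x Y * Real.exp (-Phi c Q x)
          = (polarCLM Q Y) ((x.1 * Real.exp (-Phi c Q x)) • x) := by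
      intro x
      rw [(polarCLM Q Y).map_smul, smul_eq_mul, polarCLM_apply, QuadraticMap.polar_comm]
      ring
    have h3 : (polarCLM Q Y) Y = QuadraticMap.polar (⇑Q) Y Y := polarCLM_apply Y Y
    rw [integral_congr_ae (Filter.Eventually.of_forall h2), h1, h3]
  have hid := key_identity hc hQ hint' Y
  have hsplit : ∫ x : ℝ × (Fin m → ℝ), x.1 * Pf c Q x Y * Real.exp (-Phi c Q x)
      = 2 * c * Y.1 * K + QuadraticMap.polar (⇑Q) Y Y := by
    have e1 : ∀ x : ℝ × (Fin m → ℝ), x.1 * Pf c Q x Y * Real.exp (-Phi c Q x)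
        = (2 * c * Y.1) * (x.1 ^ 2 * Real.exp (-Phi c Q x))
          + x.1 * QuadraticMap.polar (⇑Q) x Y * Real.exp (-Phi c Q x) := by
      intro x; simp only [Pf]; ring
    rw [integral_congr_ae (Filter.Eventually.of_forall e1),
      integral_add ((integrable_xsq hc hQ hint').const_mul _)
        (integrable_fst_polar hc hQ hint' Y),
      integral_const_mul, ← hK, hκ]
  have hps : QuadraticMap.polar (⇑Q) Y Y = 2 * Q Y := by
    rw [QuadraticMap.polar_self, two_smul, two_mul]
  have hmain : K * I = 2 * c * K * K + 2 * Q Y := by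
    have h5 : 2 * c * Y.1 * K + 2 * Q Y = Y.1 * I := by
      rw [← hps, ← hsplit]
      exact hid
    rw [← hY1] at h5
    linarith [h5]
  have hL : (fun x : ℝ × (Fin m → ℝ) => c * x.1 ^ 2 * Real.exp (- (c * x.1 ^ 2) - Q x))
      = fun x : ℝ × (Fin m → ℝ) => c * (x.1 ^ 2 * Real.exp (-Phi c Q x)) := by
    funext x; rw [hrw]; ring
  have hR : (fun x : ℝ × (Fin m → ℝ) => Real.exp (- (c * x.1 ^ 2) - Q x))
      = fun x : ℝ × (Fin m → ℝ) => Real.exp (-Phi c Q x) := by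
    funext x; rw [hrw]
  rw [hL, hR, integral_const_mul, ← hK, ← hI]
  rcases hK0.lt_or_eq with hKpos | hKeq
  · nlinarith [hmain, hQ Y, hI0, hKpos]
  · rw [← hKeq, mul_zero]
    linarith [hI0]
end

section
/- Let T be an integrable real random variable with mean m = E[T], let G > 0, and suppose E[e^{T}] ≤ e^{m + G/2} and E[e^{−T}] ≤ e^{−m + G/2}. If 0 ≤ E[sinh T] ≤ 1, then −G/4 ≤ m ≤ 1 + G/4. -/
/-!
STATEMENT 11: If T has mean m, E[e^T] ≤ e^{m+G/2}, E[e^{−T}] ≤ e^{−m+G/2}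
(G > 0), and 0 ≤ E[sinh T] ≤ 1, then −G/4 ≤ m ≤ 1 + G/4.
-/

open MeasureTheory

lemma jensen_exp_aux {Ω : Type*} [MeasureSpace Ω] [IsProbabilityMeasure (volume : Measure Ω)]
    (T : Ω → ℝ) (hT : Integrable T)
    (hexp : Integrable (fun ω => Real.exp (T ω))) :
    Real.exp (∫ ω, T ω) ≤ ∫ ω, Real.exp (T ω) := by
  set m := ∫ ω, T ω with hm
  have hpt : ∀ ω, Real.exp m * (T ω - m + 1) ≤ Real.exp (T ω) := by
    intro ω
    have h1 := Real.add_one_le_exp (T ω - m)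
    have h2 : Real.exp m * Real.exp (T ω - m) = Real.exp (T ω) := by
      rw [← Real.exp_add]; ring_nf
    nlinarith [Real.exp_pos m]
  have hint : Integrable (fun ω => Real.exp m * (T ω - m + 1)) :=
    (((hT.sub (integrable_const m)).add (integrable_const 1)).const_mul _)
  have := integral_mono hint hexp hpt
  calc Real.exp m = Real.exp m * ((m - m + 1)) := by ring
    _ = ∫ ω, Real.exp m * (T ω - m + 1) := by
        have hsub : Integrable (fun ω => T ω - m) := hT.sub (integrable_const m)
        have hi : (∫ ω, (T ω - m + 1)) = m - m + 1 := by
          rw [integral_add hsub (integrable_const 1), integral_sub hT (integrable_const m)]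
          simp [hm]
        rw [integral_const_mul, hi]
    _ ≤ ∫ ω, Real.exp (T ω) := this

theorem mean_bound_from_exponential_moments
    {Ω : Type*} [MeasureSpace Ω] [IsProbabilityMeasure (volume : Measure Ω)]
    (T : Ω → ℝ) (hT : Integrable T)
    (hexp : Integrable (fun ω => Real.exp (T ω)))
    (hexp' : Integrable (fun ω => Real.exp (- T ω)))
    (G : ℝ) (hG : 0 < G) (m : ℝ) (hm : m = ∫ ω, T ω)
    (h1 : ∫ ω, Real.exp (T ω) ≤ Real.exp (m + G / 2))
    (h2 : ∫ ω, Real.exp (- T ω) ≤ Real.exp (- m + G / 2))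
    (hs0 : 0 ≤ ∫ ω, Real.sinh (T ω))
    (hs1 : ∫ ω, Real.sinh (T ω) ≤ 1) :
    - G / 4 ≤ m ∧ m ≤ 1 + G / 4 := by
  -- express sinh integral
  have hsinh : ∫ ω, Real.sinh (T ω)
      = ((∫ ω, Real.exp (T ω)) - ∫ ω, Real.exp (- T ω)) / 2 := by
    rw [← integral_sub hexp hexp', ← integral_div]
    congr 1; ext ω; rw [Real.sinh_eq]
  have hJ1 : Real.exp m ≤ ∫ ω, Real.exp (T ω) := by
    rw [hm]; exact jensen_exp_aux T hT hexp
  have hJ2 : Real.exp (-m) ≤ ∫ ω, Real.exp (- T ω) := by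
    have := jensen_exp_aux (fun ω => - T ω) hT.neg (by simpa using hexp')
    have hmi : (∫ ω, - T ω) = -m := by rw [integral_neg, hm]
    rwa [hmi] at this
  constructor
  · -- e^{-m} ≤ ∫ e^{-T} ≤ ∫ e^T ≤ e^{m+G/2}
    have hle : ∫ ω, Real.exp (- T ω) ≤ ∫ ω, Real.exp (T ω) := by
      have := hs0; rw [hsinh] at this; linarith
    have : Real.exp (-m) ≤ Real.exp (m + G / 2) := le_trans hJ2 (le_trans hle h1)
    have := Real.exp_le_exp.mp this
    linarith
  · by_contra hcon
    push_neg at hcon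
    -- e^m ≤ ∫ e^T = 2∫sinh + ∫ e^{-T} ≤ 2 + e^{-m+G/2}
    have key : Real.exp m ≤ 2 + Real.exp (- m + G / 2) := by
      have h3 : ∫ ω, Real.exp (T ω)
          = 2 * (∫ ω, Real.sinh (T ω)) + ∫ ω, Real.exp (- T ω) := by
        rw [hsinh]; ring
      calc Real.exp m ≤ ∫ ω, Real.exp (T ω) := hJ1
        _ = 2 * (∫ ω, Real.sinh (T ω)) + ∫ ω, Real.exp (- T ω) := h3
        _ ≤ 2 + Real.exp (- m + G / 2) := by linarith
    -- set a = exp(m - G/4), b = exp(G/4)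
    set a := Real.exp (m - G / 4) with ha
    set b := Real.exp (G / 4) with hb
    have hea : Real.exp m = a * b := by rw [ha, hb, ← Real.exp_add]; ring_nf
    have heb : Real.exp (- m + G / 2) = b / a := by
      rw [ha, hb, Real.exp_sub, div_div_eq_mul_div, ← Real.exp_add, ← Real.exp_sub]
      ring_nf
    have hb1 : 1 ≤ b := Real.one_le_exp (by linarith)
    have hae : Real.exp 1 < a := by
      rw [ha]; exact Real.exp_lt_exp.mpr (by linarith)
    have he : (2.7182818283 : ℝ) < Real.exp 1 := Real.exp_one_gt_d9.trans_le (by norm_num)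
    have ha0 : 0 < a := Real.exp_pos _
    rw [hea, heb] at key
    -- a*b ≤ 2 + b/a, a > e > 2.71, b ≥ 1 ⇒ contradiction
    have key2 : a * b * a ≤ (2 + b / a) * a := by nlinarith
    rw [add_mul, div_mul_cancel₀ _ (ne_of_gt ha0)] at key2
    have ha2 : 0 < a ^ 2 - 1 := by nlinarith
    have h5 : 1 * (a ^ 2 - 1) ≤ b * (a ^ 2 - 1) :=
      mul_le_mul_of_nonneg_right hb1 (le_of_lt ha2)
    nlinarith
end

section
/- Let d ≥ 3 and 0 ≤ p < d−2. There exists a constant A_p < ∞, depending only on d and p, such that the following holds for every torus Λ = (ℤ/Lℤ)^d: if a assigns to each nearest-neighbor edge {x,y} of Λ a weight a_{xy} ≥ (1 + max(|x|,|y|))^{−p}, where |x| denotes the distance from x to the origin in the centered fundamental domain, then for every f : Λ → ℝ with ∑_{j∈Λ} f_j = 0 one has f_0² ≤ A_p ∑_{edges {x,y}} a_{xy} (f_x − f_y)². Equivalently, the Green's function of the weighted lattice operator L (with quadratic form (f, Lf) = ∑_{edges} a_{xy}(f_x−f_y)²), restricted to the orthogonal complement of constants, satisfies 0 ≤ L̃^{−1}(0,0)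 ≤ A_p uniformly in L. -/
/-!
STATEMENT 12 (Lemma 3 of Spencer–Zirnbauer): for d ≥ 3 and 0 ≤ p < d−2 there
is A_p < ∞, depending only on d and p, such that for every torus (ℤ/Lℤ)^d and
every family of edge weights a_{xy} ≥ (1 + max(|x|,|y|))^{−p} (|x| = distance to
the origin in the centered fundamental domain) one has, for all f with ∑ f = 0,
f(0)² ≤ A_p ∑_{edges} a_{xy}(f_x − f_y)²; i.e. 0 ≤ L̃⁻¹(0,0) ≤ A_p uniformly.
-/

open scoped Classical

noncomputable section

namespace SZ

/-- Distance of `z ∈ ℤ/Lℤ` to `0` in the centered fundamental domain. -/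
def znorm {L : ℕ} (z : ZMod L) : ℕ := min z.val (L - z.val)

/-- Distance `|x|` of a torus site to the origin (sup over the coordinates of
their centered representatives). -/
def tnorm {d L : ℕ} (x : Fin d → ZMod L) : ℕ :=
  Finset.univ.sup fun k : Fin d => znorm (x k)

set_option linter.unusedSectionVars false

/-! ### Auxiliary development -/

section Aux

variable {d L : ℕ} [NeZero L]

lemma znorm_le_half (z : ZMod L) : znorm z ≤ L / 2 := by
  have h := ZMod.val_lt z
  unfold znorm; omega

lemma znorm_zero : znorm (0 : ZMod L) = 0 := by
  unfold znorm; simp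

lemma znorm_eq_zero_iff {z : ZMod L} : znorm z = 0 ↔ z = 0 := by
  have h := ZMod.val_lt z
  have h0 := ZMod.val_eq_zero z
  unfold znorm
  constructor
  · intro hz; rw [← h0]; omega
  · intro hz; subst hz; simp

def zlift (z : ZMod L) : ℤ := if 2 * z.val < L then (z.val : ℤ) else (z.val : ℤ) - L

lemma zlift_natAbs (z : ZMod L) : (zlift z).natAbs = znorm z := by
  have h := ZMod.val_lt z
  unfold zlift znorm
  split <;> omega

lemma cast_val (z : ZMod L) : ((z.val : ℤ) : ZMod L) = z := by
  simp [ZMod.natCast_val, ZMod.cast_id]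

lemma cast_zlift (z : ZMod L) : ((zlift z : ℤ) : ZMod L) = z := by
  unfold zlift; split
  · exact cast_val z
  · push_cast
    simp [cast_val z]

lemma znorm_natCast (a : ℕ) : znorm ((a : ZMod L)) ≤ a := by
  have h := ZMod.val_natCast (n := L) a
  have h2 : a % L ≤ a := Nat.mod_le a L
  unfold znorm; omega

lemma znorm_neg (z : ZMod L) : znorm (-z) = znorm z := by
  have h := ZMod.val_lt z
  have h2 := ZMod.neg_val z
  unfold znorm
  rw [h2]
  split
  · rename_i hz; subst hz; simp
  · have h0 : z.val ≠ 0 := by rwa [ne_eq, ZMod.val_eq_zero]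
    omega

set_option linter.unusedSectionVars false in
lemma znorm_intCast_le (t : ℤ) : znorm ((t : ZMod L)) ≤ t.natAbs := by
  rcases Int.natAbs_eq t with h | h
  · calc znorm ((t : ZMod L)) = znorm (((t.natAbs : ℕ) : ZMod L)) := by conv_lhs => rw [h, Int.cast_natCast]
    _ ≤ t.natAbs := znorm_natCast _
  · calc znorm ((t : ZMod L)) = znorm (-((t.natAbs : ℕ) : ZMod L)) := by conv_lhs => rw [h, Int.cast_neg, Int.cast_natCast]
    _ = znorm (((t.natAbs : ℕ) : ZMod L)) := znorm_neg _
    _ ≤ t.natAbs := znorm_natCast _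

lemma intCast_injOn_Icc (a b : ℤ) (hlen : b - a + 1 ≤ L) :
    Set.InjOn (fun t : ℤ => (t : ZMod L)) (Finset.Icc a b : Set ℤ) := by
  intro s hs t ht hst
  simp only [Finset.coe_Icc, Set.mem_Icc] at hs ht
  have h1 : s ≡ t [ZMOD (L:ℕ)] := (ZMod.intCast_eq_intCast_iff _ _ _).mp hst
  have h2 : (L : ℤ) ∣ t - s := Int.ModEq.dvd h1
  have h3 : t - s = 0 := Int.eq_zero_of_abs_lt_dvd h2 (by rw [abs_lt]; omega)
  omega

/-! ### Windows and boxes -/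

def window (L : ℕ) [NeZero L] (m : ℕ) : Finset (ZMod L) :=
  Finset.univ.filter fun z => znorm z ≤ m

def BoxF (d L : ℕ) [NeZero L] (m : ℕ) : Finset (Fin d → ZMod L) :=
  Finset.univ.filter fun x => tnorm x ≤ m

lemma mem_BoxF {m : ℕ} {x : Fin d → ZMod L} : x ∈ BoxF d L m ↔ tnorm x ≤ m := by
  simp [BoxF]

lemma tnorm_le_iff {m : ℕ} {x : Fin d → ZMod L} : tnorm x ≤ m ↔ ∀ k, znorm (x k) ≤ m := by
  simp [tnorm, Finset.sup_le_iff]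

lemma BoxF_eq_piFinset (m : ℕ) :
    BoxF d L m = Fintype.piFinset (fun _ : Fin d => window L m) := by
  ext x
  simp [BoxF, window, tnorm, Finset.sup_le_iff, Fintype.mem_piFinset]

lemma card_BoxF (m : ℕ) : (BoxF d L m).card = (window L m).card ^ d := by
  rw [BoxF_eq_piFinset, Fintype.card_piFinset]
  simp

lemma window_mono {n m : ℕ} (h : n ≤ m) : window L n ⊆ window L m := by
  intro z hz
  simp only [window, Finset.mem_filter, Finset.mem_univ, true_and] at hz ⊢
  omega

lemma BoxF_mono {n m : ℕ} (h : n ≤ m) : BoxF d L n ⊆ BoxF d L m := by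
  intro z hz
  simp only [mem_BoxF] at hz ⊢
  omega

lemma zero_mem_BoxF (m : ℕ) : (0 : Fin d → ZMod L) ∈ BoxF d L m := by
  rw [mem_BoxF, tnorm_le_iff]
  intro k
  simp [znorm_zero]

lemma BoxF_zero : BoxF d L 0 = {(0 : Fin d → ZMod L)} := by
  ext x
  simp only [mem_BoxF, tnorm_le_iff, Finset.mem_singleton]
  constructor
  · intro h
    funext k
    exact znorm_eq_zero_iff.mp (Nat.le_zero.mp (h k))
  · intro h; subst h; intro k; simp [znorm_zero]

lemma BoxF_eq_univ {m : ℕ} (h : L / 2 ≤ m) : BoxF d L m = Finset.univ := by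
  ext x
  simp only [mem_BoxF, Finset.mem_univ, iff_true, tnorm_le_iff]
  intro k
  exact le_trans (znorm_le_half _) h

lemma card_window_le (m : ℕ) : (window L m).card ≤ 2 * m + 1 := by
  have hsub : window L m ⊆ (Finset.Icc (-(m:ℤ)) m).image (fun t : ℤ => (t : ZMod L)) := by
    intro z hz
    simp only [window, Finset.mem_filter, Finset.mem_univ, true_and] at hz
    refine Finset.mem_image.mpr ⟨zlift z, ?_, cast_zlift z⟩
    have := zlift_natAbs z
    rw [Finset.mem_Icc]
    omega
  calc (window L m).card ≤ _ := Finset.card_le_card hsub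
    _ ≤ (Finset.Icc (-(m:ℤ)) m).card := Finset.card_image_le
    _ = 2 * m + 1 := by rw [Int.card_Icc]; omega

lemma le_card_window (m : ℕ) : min (2 * m + 1) L ≤ (window L m).card := by
  by_cases h : 2 * m + 1 ≤ L
  · have hinj := intCast_injOn_Icc (L := L) (-(m:ℤ)) m (by omega)
    have hsub : (Finset.Icc (-(m:ℤ)) m).image (fun t : ℤ => (t : ZMod L)) ⊆ window L m := by
      intro z hz
      rcases Finset.mem_image.mp hz with ⟨t, ht, rfl⟩
      simp only [window, Finset.mem_filter, Finset.mem_univ, true_and]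
      have h1 : t.natAbs ≤ m := by rw [Finset.mem_Icc] at ht; omega
      exact le_trans (znorm_intCast_le t) h1
    have hcard : ((Finset.Icc (-(m:ℤ)) m).image (fun t : ℤ => (t : ZMod L))).card
        = 2 * m + 1 := by
      rw [Finset.card_image_of_injOn hinj, Int.card_Icc]
      omega
    calc min (2 * m + 1) L ≤ 2 * m + 1 := min_le_left _ _
      _ = _ := hcard.symm
      _ ≤ (window L m).card := Finset.card_le_card hsub
  · have huniv : window L m = Finset.univ := by
      ext z
      simp only [window, Finset.mem_filter, Finset.mem_univ, true_and, iff_true]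
      have := znorm_le_half z
      omega
    rw [huniv, Finset.card_univ, ZMod.card]
    omega

/-! ### Telescoping in one dimension -/

lemma tele_sum (g : ℤ → ℝ) (a : ℤ) (n : ℕ) :
    ∑ t ∈ Finset.Ico a (a + (n : ℤ)), (g (t + 1) - g t) = g (a + n) - g a := by
  induction n with
  | zero => simp
  | succ n ih =>
    have hset : Finset.Ico a (a + ((n + 1 : ℕ) : ℤ)) = insert (a + n) (Finset.Ico a (a + (n:ℤ))) := by
      ext t
      simp only [Finset.mem_Ico, Finset.mem_insert]
      omega
    have harg : a + ((n + 1 : ℕ) : ℤ) = (a + n) + 1 := by push_cast; ring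
    rw [hset, Finset.sum_insert (by simp [Finset.mem_Ico]), ih, harg]
    ring

lemma one_dim_le (g : ℤ → ℝ) {a b : ℤ} (hab : a ≤ b) :
    (g a - g b) ^ 2 ≤ ((b - a).toNat : ℝ) * ∑ t ∈ Finset.Ico a b, (g t - g (t + 1)) ^ 2 := by
  have hb : b = a + ((b - a).toNat : ℤ) := by omega
  have htele : ∑ t ∈ Finset.Ico a b, (g t - g (t + 1)) = g a - g b := by
    have := tele_sum g a (b - a).toNat
    rw [← hb] at this
    have h2 : ∑ t ∈ Finset.Ico a b, (g t - g (t + 1))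
        = -∑ t ∈ Finset.Ico a b, (g (t + 1) - g t) := by
      rw [← Finset.sum_neg_distrib]
      exact Finset.sum_congr rfl fun t _ => by ring
    rw [h2, this]
    ring
  calc (g a - g b) ^ 2 = (∑ t ∈ Finset.Ico a b, (g t - g (t + 1))) ^ 2 := by rw [htele]
    _ ≤ (Finset.Ico a b).card * ∑ t ∈ Finset.Ico a b, (g t - g (t + 1)) ^ 2 :=
        sq_sum_le_card_mul_sum_sq
    _ = ((b - a).toNat : ℝ) * ∑ t ∈ Finset.Ico a b, (g t - g (t + 1)) ^ 2 := by
        rw [Int.card_Ico]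

lemma one_dim (g : ℤ → ℝ) (a b : ℤ) :
    (g a - g b) ^ 2 ≤ (((a ⊔ b) - (a ⊓ b)).toNat : ℝ) *
      ∑ t ∈ Finset.Ico (a ⊓ b) (a ⊔ b), (g t - g (t + 1)) ^ 2 := by
  rcases le_total a b with h | h
  · rw [sup_eq_right.mpr h, inf_eq_left.mpr h]
    exact one_dim_le g h
  · rw [sup_eq_left.mpr h, inf_eq_right.mpr h]
    have := one_dim_le g h
    calc (g a - g b) ^ 2 = (g b - g a) ^ 2 := by ring
      _ ≤ _ := this

/-! ### Pair bound via telescoping paths -/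

def combine (k : Fin d) (x y : Fin d → ZMod L) : Fin d → ZMod L :=
  fun i => if (i : ℕ) < (k : ℕ) then y i else x i

def segBig (M : ℕ) (f : (Fin d → ZMod L) → ℝ) (k : Fin d) (z : Fin d → ZMod L) : ℝ :=
  ∑ t ∈ Finset.Ico (-(M : ℤ)) (M : ℤ),
    (f (Function.update z k ((t : ZMod L))) - f (Function.update z k (((t + 1 : ℤ) : ZMod L)))) ^ 2

lemma segBig_nonneg (M : ℕ) (f : (Fin d → ZMod L) → ℝ) (k : Fin d) (z : Fin d → ZMod L) :
    0 ≤ segBig M f k z :=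
  Finset.sum_nonneg fun _ _ => sq_nonneg _

lemma znorm_le_tnorm (x : Fin d → ZMod L) (k : Fin d) : znorm (x k) ≤ tnorm x :=
  Finset.le_sup (f := fun k => znorm (x k)) (Finset.mem_univ k)

def kof (hd0 : 0 < d) (j : ℕ) : Fin d := ⟨j % d, Nat.mod_lt _ hd0⟩

lemma kof_val (hd0 : 0 < d) (k : Fin d) : kof hd0 (k : ℕ) = k := by
  ext
  simp [kof, Nat.mod_eq_of_lt k.isLt]

lemma pair_bound (f : (Fin d → ZMod L) → ℝ) {m : ℕ} {x y : Fin d → ZMod L}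
    (hd0 : 0 < d) (hx : tnorm x ≤ m) (hy : tnorm y ≤ m) :
    (f x - f y) ^ 2 ≤ (d : ℝ) * ((2 * min m (L / 2) : ℕ) : ℝ) *
      ∑ k : Fin d, segBig (min m (L / 2)) f k (combine k x y) := by
  set M := min m (L / 2) with hMdef
  set H : ℕ → ℝ := fun j => f (fun i => if (i : ℕ) < j then y i else x i) with hH
  have hH0 : H 0 = f x := by simp only [hH]; congr 1
  have hHd : H d = f y := by
    simp only [hH]; congr 1; funext i; simp [i.isLt]
  have htele : f x - f y = ∑ j ∈ Finset.range d, (H j - H (j + 1)) := by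
    rw [Finset.sum_range_sub' H d, hH0, hHd]
  have key : ∀ j ∈ Finset.range d, (H j - H (j + 1)) ^ 2 ≤
      ((2 * M : ℕ) : ℝ) * segBig M f (kof hd0 j) (combine (kof hd0 j) x y) := by
    intro j hj
    rw [Finset.mem_range] at hj
    set k : Fin d := kof hd0 j with hk
    have hkj : (k : ℕ) = j := by simp [hk, kof, Nat.mod_eq_of_lt hj]
    set z := combine k x y with hz
    set g : ℤ → ℝ := fun t => f (Function.update z k ((t : ZMod L))) with hg
    have hvalne : ∀ i : Fin d, i ≠ k → (i : ℕ) ≠ j := by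
      intro i hik hc
      exact hik (Fin.ext (by rw [hc, hkj]))
    have hxz : Function.update z k (((zlift (x k) : ℤ) : ZMod L))
        = (fun i : Fin d => if (i : ℕ) < j then y i else x i) := by
      rw [cast_zlift]
      funext i
      rcases eq_or_ne i k with rfl | hik
      · rw [Function.update_self, hkj]
        simp
      · rw [Function.update_of_ne hik]
        show (if (i : ℕ) < (k : ℕ) then y i else x i) = _
        rw [hkj]
    have hyz : Function.update z k (((zlift (y k) : ℤ) : ZMod L))
        = (fun i : Fin d => if (i : ℕ) < j + 1 then y i else x i) := by
      rw [cast_zlift]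
      funext i
      rcases eq_or_ne i k with rfl | hik
      · rw [Function.update_self, hkj]
        simp
      · rw [Function.update_of_ne hik]
        show (if (i : ℕ) < (k : ℕ) then y i else x i) = _
        rw [hkj]
        have hne := hvalne i hik
        by_cases hlt : (i : ℕ) < j
        · rw [if_pos hlt, if_pos (by omega)]
        · rw [if_neg hlt, if_neg (by omega)]
    have heq : H j - H (j + 1) = g (zlift (x k)) - g (zlift (y k)) := by
      simp only [hH, hg, hxz, hyz]
    have hax : (zlift (x k)).natAbs ≤ M := by
      rw [zlift_natAbs]
      have h1 := znorm_le_tnorm x k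
      have h2 := znorm_le_half (x k)
      omega
    have hay : (zlift (y k)).natAbs ≤ M := by
      rw [zlift_natAbs]
      have h1 := znorm_le_tnorm y k
      have h2 := znorm_le_half (y k)
      omega
    set a := zlift (x k)
    set b := zlift (y k)
    have hcard : (((a ⊔ b) - (a ⊓ b)).toNat : ℝ) ≤ ((2 * M : ℕ) : ℝ) := by
      have : ((a ⊔ b) - (a ⊓ b)).toNat ≤ 2 * M := by
        rcases le_total a b with h | h
        · rw [sup_eq_right.mpr h, inf_eq_left.mpr h]; omega
        · rw [sup_eq_left.mpr h, inf_eq_right.mpr h]; omega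
      exact_mod_cast this
    have hlo : -(M : ℤ) ≤ a ⊓ b := by
      rcases le_total a b with h | h
      · rw [inf_eq_left.mpr h]; omega
      · rw [inf_eq_right.mpr h]; omega
    have hhi : a ⊔ b ≤ (M : ℤ) := by
      rcases le_total a b with h | h
      · rw [sup_eq_right.mpr h]; omega
      · rw [sup_eq_left.mpr h]; omega
    have hsub : Finset.Ico (a ⊓ b) (a ⊔ b) ⊆ Finset.Ico (-(M : ℤ)) (M : ℤ) := by
      intro t ht
      rw [Finset.mem_Ico] at ht ⊢
      omega
    have hseg : segBig M f k z = ∑ t ∈ Finset.Ico (-(M : ℤ)) (M : ℤ), (g t - g (t + 1)) ^ 2 := rfl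
    have hsum : ∑ t ∈ Finset.Ico (a ⊓ b) (a ⊔ b), (g t - g (t + 1)) ^ 2 ≤ segBig M f k z := by
      rw [hseg]
      exact Finset.sum_le_sum_of_subset_of_nonneg hsub fun _ _ _ => sq_nonneg _
    calc (H j - H (j + 1)) ^ 2 = (g a - g b) ^ 2 := by rw [heq]
      _ ≤ (((a ⊔ b) - (a ⊓ b)).toNat : ℝ) * ∑ t ∈ Finset.Ico (a ⊓ b) (a ⊔ b), (g t - g (t + 1)) ^ 2 :=
          one_dim g a b
      _ ≤ ((2 * M : ℕ) : ℝ) * segBig M f k z := by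
          apply mul_le_mul hcard hsum (Finset.sum_nonneg fun _ _ => sq_nonneg _) (by positivity)
  have hreindex : ∑ j ∈ Finset.range d, segBig M f (kof hd0 j) (combine (kof hd0 j) x y)
      = ∑ k : Fin d, segBig M f k (combine k x y) := by
    rw [← Fin.sum_univ_eq_sum_range (fun j => segBig M f (kof hd0 j) (combine (kof hd0 j) x y)) d]
    exact Finset.sum_congr rfl fun k _ => by rw [kof_val]
  calc (f x - f y) ^ 2 = (∑ j ∈ Finset.range d, (H j - H (j + 1))) ^ 2 := by rw [htele]
    _ ≤ (Finset.range d).card * ∑ j ∈ Finset.range d, (H j - H (j + 1)) ^ 2 :=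
        sq_sum_le_card_mul_sum_sq
    _ ≤ (d : ℝ) * ∑ j ∈ Finset.range d, ((2 * M : ℕ) : ℝ) * segBig M f (kof hd0 j) (combine (kof hd0 j) x y) := by
        rw [Finset.card_range]
        exact mul_le_mul_of_nonneg_left (Finset.sum_le_sum key) (by positivity)
    _ = (d : ℝ) * ((2 * M : ℕ) : ℝ) * ∑ k : Fin d, segBig M f k (combine k x y) := by
        rw [← Finset.mul_sum, ← hreindex, mul_assoc]

/-! ### Counting lemmas -/

lemma tnorm_update_le {m : ℕ} {x : Fin d → ZMod L} (hx : tnorm x ≤ m) {k : Fin d} {c : ZMod L}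
    (hc : znorm c ≤ m) : tnorm (Function.update x k c) ≤ m := by
  rw [tnorm_le_iff] at hx ⊢
  intro i
  rcases eq_or_ne i k with rfl | hik
  · rwa [Function.update_self]
  · rw [Function.update_of_ne hik]
    exact hx i

lemma combine_mem {m : ℕ} {x y : Fin d → ZMod L} (k : Fin d)
    (hx : tnorm x ≤ m) (hy : tnorm y ≤ m) : tnorm (combine k x y) ≤ m := by
  rw [tnorm_le_iff] at hx hy ⊢
  intro i
  unfold combine
  split
  · exact hy i
  · exact hx i

lemma combine_combine (k : Fin d) (x y : Fin d → ZMod L) :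
    combine k (combine k x y) (combine k y x) = x := by
  funext i
  unfold combine
  split <;> simp_all

/-- Step (iii): the involution trick. -/
lemma double_sum_combine {n m : ℕ} (hnm : n ≤ m) (G : (Fin d → ZMod L) → ℝ)
    (hG : ∀ z, 0 ≤ G z) (k : Fin d) :
    ∑ x ∈ BoxF d L n, ∑ y ∈ BoxF d L m, G (combine k x y)
      ≤ ((BoxF d L m).card : ℝ) * ∑ z ∈ BoxF d L m, G z := by
  have h1 : ∑ x ∈ BoxF d L n, ∑ y ∈ BoxF d L m, G (combine k x y)
      ≤ ∑ x ∈ BoxF d L m, ∑ y ∈ BoxF d L m, G (combine k x y) := by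
    apply Finset.sum_le_sum_of_subset_of_nonneg (BoxF_mono hnm)
    intro x _ _
    exact Finset.sum_nonneg fun y _ => hG _
  have h2 : ∑ x ∈ BoxF d L m, ∑ y ∈ BoxF d L m, G (combine k x y)
      = ∑ x ∈ BoxF d L m, ∑ y ∈ BoxF d L m, G x := by
    rw [← Finset.sum_product', ← Finset.sum_product']
    apply Finset.sum_nbij' (i := fun p => (combine k p.1 p.2, combine k p.2 p.1))
      (j := fun p => (combine k p.1 p.2, combine k p.2 p.1))
    · intro p hp
      rw [Finset.mem_product] at hp ⊢
      rcases hp with ⟨hp1, hp2⟩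
      rw [mem_BoxF] at hp1 hp2
      exact ⟨mem_BoxF.mpr (combine_mem k hp1 hp2), mem_BoxF.mpr (combine_mem k hp2 hp1)⟩
    · intro p hp
      rw [Finset.mem_product] at hp ⊢
      rcases hp with ⟨hp1, hp2⟩
      rw [mem_BoxF] at hp1 hp2
      exact ⟨mem_BoxF.mpr (combine_mem k hp1 hp2), mem_BoxF.mpr (combine_mem k hp2 hp1)⟩
    · rintro ⟨p1, p2⟩ -
      simp [combine_combine]
    · rintro ⟨p1, p2⟩ -
      simp [combine_combine]
    · intro p _
      exact rfl
  have h3 : ∑ x ∈ BoxF d L m, ∑ y ∈ BoxF d L m, G x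
      = ((BoxF d L m).card : ℝ) * ∑ z ∈ BoxF d L m, G z := by
    simp only [Finset.sum_const, nsmul_eq_mul]
    rw [Finset.mul_sum]
  calc _ ≤ _ := h1
    _ = _ := h2
    _ = _ := h3

/-- Step (iv) helper: collapsing one coordinate costs a factor `window.card`. -/
lemma sum_update_le (m : ℕ) (T : (Fin d → ZMod L) → ℝ) (hT : ∀ v, 0 ≤ T v)
    (k : Fin d) (c : ZMod L) (hc : znorm c ≤ m) :
    ∑ z ∈ BoxF d L m, T (Function.update z k c)
      ≤ ((window L m).card : ℝ) * ∑ v ∈ (BoxF d L m).filter (fun v => v k = c), T v := by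
  rw [Finset.sum_comp T (fun z => Function.update z k c)]
  have himg : (BoxF d L m).image (fun z => Function.update z k c)
      ⊆ (BoxF d L m).filter (fun v => v k = c) := by
    intro v hv
    rcases Finset.mem_image.mp hv with ⟨z, hz, rfl⟩
    rw [Finset.mem_filter, mem_BoxF]
    exact ⟨tnorm_update_le (mem_BoxF.mp hz) hc, Function.update_self _ _ _⟩
  have hfib : ∀ v : Fin d → ZMod L,
      (((BoxF d L m).filter (fun z => Function.update z k c = v)).card : ℝ)
        ≤ ((window L m).card : ℝ) := by
    intro v
    rw [Nat.cast_le]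
    apply Finset.card_le_card_of_injOn (fun z => z k)
    · intro z hz
      rw [Finset.mem_coe, Finset.mem_filter] at hz
      have := mem_BoxF.mp hz.1
      rw [tnorm_le_iff] at this
      simp only [window, Finset.mem_coe, Finset.mem_filter, Finset.mem_univ, true_and]
      exact this k
    · intro z1 hz1 z2 hz2 hk12
      rw [Finset.mem_coe, Finset.mem_filter] at hz1 hz2
      funext i
      rcases eq_or_ne i k with rfl | hik
      · exact hk12
      · have := congrFun (hz1.2.trans hz2.2.symm) i
        rwa [Function.update_of_ne hik, Function.update_of_ne hik] at this
  calc ∑ v ∈ (BoxF d L m).image (fun z => Function.update z k c),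
        ((BoxF d L m).filter (fun z => Function.update z k c = v)).card • T v
      ≤ ∑ v ∈ (BoxF d L m).image (fun z => Function.update z k c),
        ((window L m).card : ℝ) * T v := by
        apply Finset.sum_le_sum
        intro v _
        rw [nsmul_eq_mul]
        exact mul_le_mul_of_nonneg_right (hfib v) (hT v)
    _ = ((window L m).card : ℝ) * ∑ v ∈ (BoxF d L m).image (fun z => Function.update z k c), T v := by
        rw [Finset.mul_sum]
    _ ≤ ((window L m).card : ℝ) * ∑ v ∈ (BoxF d L m).filter (fun v => v k = c), T v := by
        apply mul_le_mul_of_nonneg_left _ (Nat.cast_nonneg _)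
        exact Finset.sum_le_sum_of_subset_of_nonneg himg fun v _ _ => hT v

def edgeK (m : ℕ) (f : (Fin d → ZMod L) → ℝ) (k : Fin d) : ℝ :=
  ∑ v : Fin d → ZMod L,
    if tnorm v ≤ m ∧ tnorm (Function.update v k (v k + 1)) ≤ m
    then (f v - f (Function.update v k (v k + 1))) ^ 2 else 0

lemma edgeK_nonneg (m : ℕ) (f : (Fin d → ZMod L) → ℝ) (k : Fin d) : 0 ≤ edgeK m f k := by
  apply Finset.sum_nonneg
  intro v _
  split
  · exact sq_nonneg _
  · exact le_refl 0

/-- Step (iv). -/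
lemma segBig_sum_le (m : ℕ) (f : (Fin d → ZMod L) → ℝ) (k : Fin d) :
    ∑ z ∈ BoxF d L m, segBig (min m (L / 2)) f k z
      ≤ ((window L m).card : ℝ) * edgeK m f k := by
  set M := min m (L / 2) with hM
  have hMm : M ≤ m := min_le_left _ _
  have hML : 2 * M ≤ L := by
    have : M ≤ L / 2 := min_le_right _ _
    omega
  -- swap the sums
  have hswap : ∑ z ∈ BoxF d L m, segBig M f k z
      = ∑ t ∈ Finset.Ico (-(M : ℤ)) (M : ℤ), ∑ z ∈ BoxF d L m,
        (f (Function.update z k ((t : ZMod L))) - f (Function.update z k (((t + 1 : ℤ) : ZMod L)))) ^ 2 := by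
    unfold segBig
    rw [Finset.sum_comm]
  set T : (Fin d → ZMod L) → ℝ := fun v => (f v - f (Function.update v k (v k + 1))) ^ 2 with hT
  have hTnn : ∀ v, 0 ≤ T v := fun v => sq_nonneg _
  have hstep : ∀ t ∈ Finset.Ico (-(M : ℤ)) (M : ℤ),
      ∑ z ∈ BoxF d L m,
        (f (Function.update z k ((t : ZMod L))) - f (Function.update z k (((t + 1 : ℤ) : ZMod L)))) ^ 2
      ≤ ((window L m).card : ℝ) * ∑ v ∈ (BoxF d L m).filter (fun v => v k = (t : ZMod L)), T v := by
    intro t ht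
    rw [Finset.mem_Ico] at ht
    have hzn : znorm ((t : ZMod L)) ≤ m := by
      have := znorm_intCast_le (L := L) t
      have : t.natAbs ≤ M := by omega
      calc znorm ((t : ZMod L)) ≤ t.natAbs := znorm_intCast_le t
        _ ≤ M := this
        _ ≤ m := hMm
    have hident : ∀ z : Fin d → ZMod L,
        (f (Function.update z k ((t : ZMod L))) - f (Function.update z k (((t + 1 : ℤ) : ZMod L)))) ^ 2
        = T (Function.update z k ((t : ZMod L))) := by
      intro z
      have h1 : Function.update z k (((t + 1 : ℤ) : ZMod L))
          = Function.update (Function.update z k ((t : ZMod L))) k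
              ((Function.update z k ((t : ZMod L))) k + 1) := by
        rw [Function.update_idem, Function.update_self]
        push_cast
        rfl
      rw [hT]
      simp only []
      rw [h1]
    calc ∑ z ∈ BoxF d L m, _ = ∑ z ∈ BoxF d L m, T (Function.update z k ((t : ZMod L))) :=
          Finset.sum_congr rfl fun z _ => hident z
      _ ≤ _ := sum_update_le m T hTnn k _ hzn
  have hcond : ∀ t : ℤ, t ∈ Finset.Ico (-(M : ℤ)) (M : ℤ) →
      ∀ v, v ∈ (BoxF d L m).filter (fun v => v k = (t : ZMod L)) →
      (tnorm v ≤ m ∧ tnorm (Function.update v k (v k + 1)) ≤ m) := by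
    intro t ht v hv
    rw [Finset.mem_Ico] at ht
    rw [Finset.mem_filter, mem_BoxF] at hv
    refine ⟨hv.1, ?_⟩
    apply tnorm_update_le hv.1
    rw [hv.2]
    have h1 : ((t : ZMod L) + 1) = (((t + 1 : ℤ)) : ZMod L) := by push_cast; rfl
    rw [h1]
    calc znorm _ ≤ (t + 1).natAbs := znorm_intCast_le _
      _ ≤ m := by omega
  have hdisj : (↑(Finset.Ico (-(M : ℤ)) (M : ℤ)) : Set ℤ).PairwiseDisjoint
      (fun t : ℤ => (BoxF d L m).filter (fun v => v k = (t : ZMod L))) := by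
    intro t1 ht1 t2 ht2 hne
    apply Finset.disjoint_left.mpr
    intro v hv1 hv2
    rw [Finset.mem_filter] at hv1 hv2
    apply hne
    have heq : ((t1 : ZMod L)) = (t2 : ZMod L) := by rw [← hv1.2, hv2.2]
    rw [Finset.coe_Ico, Set.mem_Ico] at ht1 ht2
    refine intCast_injOn_Icc (L := L) (-(M : ℤ)) ((M : ℤ) - 1) (by omega) ?_ ?_ heq
    · rw [Finset.coe_Icc, Set.mem_Icc]; omega
    · rw [Finset.coe_Icc, Set.mem_Icc]; omega
  rw [hswap]
  calc ∑ t ∈ Finset.Ico (-(M : ℤ)) (M : ℤ), ∑ z ∈ BoxF d L m,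
        (f (Function.update z k ((t : ZMod L))) - f (Function.update z k (((t + 1 : ℤ) : ZMod L)))) ^ 2
      ≤ ∑ t ∈ Finset.Ico (-(M : ℤ)) (M : ℤ), ((window L m).card : ℝ) *
          ∑ v ∈ (BoxF d L m).filter (fun v => v k = (t : ZMod L)), T v :=
        Finset.sum_le_sum hstep
    _ = ((window L m).card : ℝ) * ∑ t ∈ Finset.Ico (-(M : ℤ)) (M : ℤ),
          ∑ v ∈ (BoxF d L m).filter (fun v => v k = (t : ZMod L)), T v := by
        rw [Finset.mul_sum]
    _ ≤ ((window L m).card : ℝ) * edgeK m f k := by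
        apply mul_le_mul_of_nonneg_left _ (Nat.cast_nonneg _)
        have hsub2 : ∀ t ∈ Finset.Ico (-(M : ℤ)) (M : ℤ),
            ∑ v ∈ (BoxF d L m).filter (fun v => v k = (t : ZMod L)), T v
            = ∑ v ∈ (BoxF d L m).filter (fun v => v k = (t : ZMod L)),
                (if tnorm v ≤ m ∧ tnorm (Function.update v k (v k + 1)) ≤ m then T v else 0) := by
          intro t ht
          apply Finset.sum_congr rfl
          intro v hv
          rw [if_pos (hcond t ht v hv)]
        rw [Finset.sum_congr rfl hsub2, ← Finset.sum_biUnion hdisj]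
        have hedge : edgeK m f k = ∑ v : Fin d → ZMod L,
            (if tnorm v ≤ m ∧ tnorm (Function.update v k (v k + 1)) ≤ m then T v else 0) := rfl
        rw [hedge]
        apply Finset.sum_le_sum_of_subset_of_nonneg (Finset.subset_univ _)
        intro v _ _
        split
        · exact hTnn v
        · exact le_refl 0

/-- Step (v): comparing box edges with the weighted Dirichlet form. -/
lemma edgeK_sum_le (hL : 2 ≤ L) {p : ℝ} (hp0 : 0 ≤ p) (m : ℕ)
    (a : (Fin d → ZMod L) → (Fin d → ZMod L) → ℝ)
    (hlow : ∀ x y, Adj x y → ((1 : ℝ) + (max (tnorm x) (tnorm y) : ℕ)) ^ (-p) ≤ a x y)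
    (f : (Fin d → ZMod L) → ℝ) :
    ∑ k : Fin d, edgeK m f k
      ≤ ((1 : ℝ) + m) ^ p * (2 * nnSum (fun x y => a x y * (f x - f y) ^ 2)) := by
  haveI : Fact (1 < L) := ⟨by omega⟩
  have hone : (1 : ZMod L) ≠ 0 := one_ne_zero
  have hm1 : (0 : ℝ) < 1 + m := by positivity
  have hstep1 : ∑ k : Fin d, edgeK m f k ≤
      ∑ v : Fin d → ZMod L, ∑ w : Fin d → ZMod L,
        (if Adj v w ∧ tnorm v ≤ m ∧ tnorm w ≤ m then (f v - f w) ^ 2 else 0) := by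
    unfold edgeK
    rw [Finset.sum_comm]
    apply Finset.sum_le_sum
    intro v _
    set φ : Fin d → (Fin d → ZMod L) := fun k => Function.update v k (v k + 1) with hφ
    have hφne : ∀ k, v ≠ φ k := by
      intro k h
      have := congrFun h k
      rw [hφ] at this
      simp only [Function.update_self] at this
      exact hone (left_eq_add.mp this)
    have hAdj : ∀ k, Adj v (φ k) := fun k => ⟨hφne k, k, Or.inl rfl⟩
    have hφinj : Set.InjOn φ ↑(Finset.univ : Finset (Fin d)) := by
      intro k1 _ k2 _ h
      by_contra hne
      have h1 := congrFun h k1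
      rw [hφ] at h1
      simp only [Function.update_self] at h1
      rw [Function.update_of_ne hne] at h1
      exact hone (left_eq_add.mp h1.symm)
    set g : (Fin d → ZMod L) → ℝ := fun w =>
      (if Adj v w ∧ tnorm v ≤ m ∧ tnorm w ≤ m then (f v - f w) ^ 2 else 0) with hg
    have hgnn : ∀ w, 0 ≤ g w := by
      intro w
      rw [hg]
      dsimp only
      split
      · exact sq_nonneg _
      · exact le_refl 0
    calc ∑ k : Fin d, (if tnorm v ≤ m ∧ tnorm (Function.update v k (v k + 1)) ≤ m
            then (f v - f (Function.update v k (v k + 1))) ^ 2 else 0)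
        ≤ ∑ k : Fin d, g (φ k) := by
          apply Finset.sum_le_sum
          intro k _
          have hval : g (φ k) = if Adj v (φ k) ∧ tnorm v ≤ m ∧ tnorm (φ k) ≤ m
              then (f v - f (φ k)) ^ 2 else 0 := by rw [hg]
          rw [hval]
          show (if tnorm v ≤ m ∧ tnorm (φ k) ≤ m then (f v - f (φ k)) ^ 2 else 0) ≤ _
          split_ifs with h1 h2
          · exact le_refl _
          · exact absurd ⟨hAdj k, h1⟩ h2
          · exact sq_nonneg _
          · exact le_refl 0
      _ = ∑ w ∈ (Finset.univ : Finset (Fin d)).image φ, g w := (Finset.sum_image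
            (fun k1 h1 k2 h2 h => hφinj (Finset.mem_coe.mpr h1) (Finset.mem_coe.mpr h2) h)).symm
      _ ≤ ∑ w : Fin d → ZMod L, g w :=
          Finset.sum_le_sum_of_subset_of_nonneg (Finset.subset_univ _) fun w _ _ => hgnn w
  have hstep2 : ∑ v : Fin d → ZMod L, ∑ w : Fin d → ZMod L,
        (if Adj v w ∧ tnorm v ≤ m ∧ tnorm w ≤ m then (f v - f w) ^ 2 else 0)
      ≤ ((1 : ℝ) + m) ^ p * (2 * nnSum (fun x y => a x y * (f x - f y) ^ 2)) := by
    have h2nn : 2 * nnSum (fun x y => a x y * (f x - f y) ^ 2)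
        = ∑ v : Fin d → ZMod L, ∑ w : Fin d → ZMod L,
          (if Adj v w then a v w * (f v - f w) ^ 2 else 0) := by
      unfold nnSum
      ring
    rw [h2nn, Finset.mul_sum]
    apply Finset.sum_le_sum
    intro v _
    rw [Finset.mul_sum]
    apply Finset.sum_le_sum
    intro w _
    split_ifs with h1 h2
    · -- Adj and boxes
      rcases h1 with ⟨hadj, hv, hw⟩
      have hbase : (0 : ℝ) < 1 + (max (tnorm v) (tnorm w) : ℕ) := by positivity
      have hbase_le : (1 : ℝ) + (max (tnorm v) (tnorm w) : ℕ) ≤ 1 + m := by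
        have : max (tnorm v) (tnorm w) ≤ m := by omega
        have h2 : ((max (tnorm v) (tnorm w) : ℕ) : ℝ) ≤ (m : ℝ) := Nat.cast_le.mpr this
        linarith
      have ha1 : ((1 : ℝ) + m) ^ (-p) ≤ a v w := by
        calc ((1 : ℝ) + m) ^ (-p) ≤ ((1 : ℝ) + (max (tnorm v) (tnorm w) : ℕ)) ^ (-p) :=
              Real.rpow_le_rpow_of_nonpos hbase hbase_le (neg_nonpos.mpr hp0)
          _ ≤ a v w := hlow v w hadj
      have hone_le : (1 : ℝ) ≤ ((1 : ℝ) + m) ^ p * a v w := by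
        have h3 : ((1 : ℝ) + m) ^ p * ((1 : ℝ) + m) ^ (-p) = 1 := by
          rw [Real.rpow_neg hm1.le]
          exact mul_inv_cancel₀ (ne_of_gt (Real.rpow_pos_of_pos hm1 p))
        calc (1 : ℝ) = ((1 : ℝ) + m) ^ p * ((1 : ℝ) + m) ^ (-p) := h3.symm
          _ ≤ ((1 : ℝ) + m) ^ p * a v w :=
              mul_le_mul_of_nonneg_left ha1 (Real.rpow_nonneg hm1.le p)
      calc (f v - f w) ^ 2 = 1 * (f v - f w) ^ 2 := by ring
        _ ≤ (((1 : ℝ) + m) ^ p * a v w) * (f v - f w) ^ 2 :=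
            mul_le_mul_of_nonneg_right hone_le (sq_nonneg _)
        _ = ((1 : ℝ) + m) ^ p * (a v w * (f v - f w) ^ 2) := by ring
    · exact absurd h1.1 h2
    · rename_i hAdjvw
      have ha0 : 0 ≤ a v w := le_trans (Real.rpow_nonneg (by positivity) _) (hlow v w hAdjvw)
      exact mul_nonneg (Real.rpow_nonneg hm1.le p) (mul_nonneg ha0 (sq_nonneg _))
    · rw [mul_zero]
  exact le_trans hstep1 hstep2

lemma nnSum_nonneg {p : ℝ}
    (a : (Fin d → ZMod L) → (Fin d → ZMod L) → ℝ)
    (hlow : ∀ x y, Adj x y → ((1 : ℝ) + (max (tnorm x) (tnorm y) : ℕ)) ^ (-p) ≤ a x y)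
    (f : (Fin d → ZMod L) → ℝ) :
    0 ≤ nnSum (fun x y => a x y * (f x - f y) ^ 2) := by
  unfold nnSum
  apply mul_nonneg (by norm_num)
  apply Finset.sum_nonneg
  intro v _
  apply Finset.sum_nonneg
  intro w _
  split_ifs with h
  · have ha0 : 0 ≤ a v w := le_trans (Real.rpow_nonneg (by positivity) _) (hlow v w h)
    positivity
  · exact le_refl 0

/-- The key one-scale comparison of box averages. -/
lemma avg_step (hd0 : 0 < d) (hL : 2 ≤ L) {p : ℝ} (hp0 : 0 ≤ p)
    (a : (Fin d → ZMod L) → (Fin d → ZMod L) → ℝ)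
    (hlow : ∀ x y, Adj x y → ((1 : ℝ) + (max (tnorm x) (tnorm y) : ℕ)) ^ (-p) ≤ a x y)
    (f : (Fin d → ZMod L) → ℝ) {n m : ℕ} (hnm : n ≤ m) :
    ((∑ x ∈ BoxF d L n, f x) / ((BoxF d L n).card : ℝ)
      - (∑ y ∈ BoxF d L m, f y) / ((BoxF d L m).card : ℝ)) ^ 2
    ≤ (4 * d * m * ((window L m).card : ℝ) * ((1 : ℝ) + m) ^ p
        / ((window L n).card : ℝ) ^ d)
      * nnSum (fun x y => a x y * (f x - f y) ^ 2) := by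
  set D := nnSum (fun x y => a x y * (f x - f y) ^ 2) with hD
  have hDnn : 0 ≤ D := nnSum_nonneg a hlow f
  set M := min m (L / 2) with hM
  set Bn := BoxF d L n
  set Bm := BoxF d L m
  set W : ℝ := ((window L n).card : ℝ) with hW
  set Wm : ℝ := ((window L m).card : ℝ) with hWm
  have hWpos : 0 < W := by
    rw [hW]
    have h1 := le_card_window (L := L) n
    have : 0 < (window L n).card := by omega
    exact_mod_cast this
  have hWmpos : 0 < Wm := by
    rw [hWm]
    have h1 := le_card_window (L := L) m
    have : 0 < (window L m).card := by omega
    exact_mod_cast this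
  have hcn : ((Bn.card : ℝ)) = W ^ d := by rw [hW]; rw [card_BoxF]; push_cast; rfl
  have hcm : ((Bm.card : ℝ)) = Wm ^ d := by rw [hWm]; rw [card_BoxF]; push_cast; rfl
  set cn : ℝ := (Bn.card : ℝ)
  set cm : ℝ := (Bm.card : ℝ)
  have hcnpos : 0 < cn := by rw [hcn]; positivity
  have hcmpos : 0 < cm := by rw [hcm]; positivity
  have hccpos : 0 < cn * cm := mul_pos hcnpos hcmpos
  set SS := ∑ x ∈ Bn, ∑ y ∈ Bm, (f x - f y) ^ 2 with hSSdef
  -- (i)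
  have hsum : ∑ x ∈ Bn, ∑ y ∈ Bm, (f x - f y)
      = cm * (∑ x ∈ Bn, f x) - cn * (∑ y ∈ Bm, f y) := by
    have hinner : ∀ x, ∑ y ∈ Bm, (f x - f y) = cm * f x - ∑ y ∈ Bm, f y := by
      intro x
      rw [Finset.sum_sub_distrib, Finset.sum_const, nsmul_eq_mul]
    rw [Finset.sum_congr rfl fun x _ => hinner x, Finset.sum_sub_distrib,
      Finset.sum_const, nsmul_eq_mul, Finset.mul_sum]
    simp only [← Finset.mul_sum]
  have hBd : (∑ x ∈ Bn, f x) / cn - (∑ y ∈ Bm, f y) / cm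
      = (∑ x ∈ Bn, ∑ y ∈ Bm, (f x - f y)) / (cn * cm) := by
    rw [hsum]
    field_simp
  have hCS : (∑ x ∈ Bn, ∑ y ∈ Bm, (f x - f y)) ^ 2 ≤ (cn * cm) * SS := by
    rw [← Finset.sum_product' (s := Bn) (t := Bm) (f := fun x y => f x - f y)]
    have := sq_sum_le_card_mul_sum_sq (s := Bn ×ˢ Bm) (f := fun q => f q.1 - f q.2)
    calc (∑ q ∈ Bn ×ˢ Bm, (f q.1 - f q.2)) ^ 2
        ≤ ((Bn ×ˢ Bm).card : ℝ) * ∑ q ∈ Bn ×ˢ Bm, (f q.1 - f q.2) ^ 2 := this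
      _ = (cn * cm) * SS := by
          rw [Finset.card_product, Finset.sum_product (f := fun q : _ × _ => (f q.1 - f q.2) ^ 2)]
          push_cast
          rfl
  have hstep_i : ((∑ x ∈ Bn, f x) / cn - (∑ y ∈ Bm, f y) / cm) ^ 2 ≤ SS / (cn * cm) := by
    rw [hBd, div_pow]
    calc (∑ x ∈ Bn, ∑ y ∈ Bm, (f x - f y)) ^ 2 / (cn * cm) ^ 2
        ≤ ((cn * cm) * SS) / (cn * cm) ^ 2 := by
          apply div_le_div_of_nonneg_right hCS (by positivity)
      _ = SS / (cn * cm) := by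
          rw [pow_two, mul_div_mul_left _ _ (ne_of_gt hccpos)]
  -- (ii)
  have hpair : SS ≤ (d : ℝ) * ((2 * M : ℕ) : ℝ)
      * ∑ k : Fin d, ∑ x ∈ Bn, ∑ y ∈ Bm, segBig M f k (combine k x y) := by
    have h1 : SS ≤ ∑ x ∈ Bn, ∑ y ∈ Bm,
        ((d : ℝ) * ((2 * M : ℕ) : ℝ) * ∑ k : Fin d, segBig M f k (combine k x y)) := by
      apply Finset.sum_le_sum
      intro x hx
      apply Finset.sum_le_sum
      intro y hy
      exact pair_bound f hd0 (le_trans (mem_BoxF.mp hx) hnm) (mem_BoxF.mp hy)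
    calc SS ≤ _ := h1
      _ = (d : ℝ) * ((2 * M : ℕ) : ℝ)
          * ∑ x ∈ Bn, ∑ y ∈ Bm, ∑ k : Fin d, segBig M f k (combine k x y) := by
          rw [Finset.mul_sum]
          apply Finset.sum_congr rfl
          intro x _
          rw [Finset.mul_sum]
      _ = (d : ℝ) * ((2 * M : ℕ) : ℝ)
          * ∑ k : Fin d, ∑ x ∈ Bn, ∑ y ∈ Bm, segBig M f k (combine k x y) := by
          congr 1
          rw [Finset.sum_congr rfl fun x _ =>
            Finset.sum_comm (s := Bm) (t := (Finset.univ : Finset (Fin d)))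
              (f := fun y k => segBig M f k (combine k x y))]
          exact Finset.sum_comm
  -- (iii)+(iv)
  have hkk : ∀ k : Fin d, ∑ x ∈ Bn, ∑ y ∈ Bm, segBig M f k (combine k x y)
      ≤ cm * (Wm * edgeK m f k) := by
    intro k
    calc ∑ x ∈ Bn, ∑ y ∈ Bm, segBig M f k (combine k x y)
        ≤ cm * ∑ z ∈ Bm, segBig M f k z :=
          double_sum_combine hnm (segBig M f k) (segBig_nonneg M f k) k
      _ ≤ cm * (Wm * edgeK m f k) := by
          apply mul_le_mul_of_nonneg_left _ hcmpos.le
          exact segBig_sum_le m f k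
  have hsumk : ∑ k : Fin d, ∑ x ∈ Bn, ∑ y ∈ Bm, segBig M f k (combine k x y)
      ≤ cm * Wm * (((1 : ℝ) + m) ^ p * (2 * D)) := by
    calc ∑ k : Fin d, ∑ x ∈ Bn, ∑ y ∈ Bm, segBig M f k (combine k x y)
        ≤ ∑ k : Fin d, cm * (Wm * edgeK m f k) := Finset.sum_le_sum fun k _ => hkk k
      _ = cm * Wm * ∑ k : Fin d, edgeK m f k := by
          simp only [← mul_assoc, ← Finset.mul_sum]
      _ ≤ cm * Wm * (((1 : ℝ) + m) ^ p * (2 * D)) := by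
          apply mul_le_mul_of_nonneg_left _ (by positivity)
          exact edgeK_sum_le hL hp0 m a hlow f
  have hM2 : ((2 * M : ℕ) : ℝ) ≤ 2 * (m : ℝ) := by
    have h1 : (2 * M : ℕ) ≤ 2 * m := by omega
    exact_mod_cast h1
  have hSS : SS ≤ (d : ℝ) * (2 * (m : ℝ)) * (cm * Wm * (((1 : ℝ) + m) ^ p * (2 * D))) := by
    calc SS ≤ (d : ℝ) * ((2 * M : ℕ) : ℝ)
          * ∑ k : Fin d, ∑ x ∈ Bn, ∑ y ∈ Bm, segBig M f k (combine k x y) := hpair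
      _ ≤ (d : ℝ) * ((2 * M : ℕ) : ℝ) * (cm * Wm * (((1 : ℝ) + m) ^ p * (2 * D))) := by
          apply mul_le_mul_of_nonneg_left hsumk (by positivity)
      _ ≤ (d : ℝ) * (2 * (m : ℝ)) * (cm * Wm * (((1 : ℝ) + m) ^ p * (2 * D))) := by
          apply mul_le_mul_of_nonneg_right _ (by positivity)
          exact mul_le_mul_of_nonneg_left hM2 (Nat.cast_nonneg d)
  calc ((∑ x ∈ Bn, f x) / cn - (∑ y ∈ Bm, f y) / cm) ^ 2 ≤ SS / (cn * cm) := hstep_i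
    _ ≤ ((d : ℝ) * (2 * (m : ℝ)) * (cm * Wm * (((1 : ℝ) + m) ^ p * (2 * D)))) / (cn * cm) :=
        div_le_div_of_nonneg_right hSS hccpos.le
    _ = (4 * (d : ℝ) * (m : ℝ) * Wm * ((1 : ℝ) + m) ^ p / cn) * D := by
        field_simp
        ring
    _ = (4 * (d : ℝ) * (m : ℝ) * Wm * ((1 : ℝ) + m) ^ p / W ^ d) * D := by rw [hcn]

/-- Dyadic step estimate. -/
lemma dyadic_step (hd : 3 ≤ d) (hL : 2 ≤ L) {p : ℝ} (hp0 : 0 ≤ p) (hp : p < (d : ℝ) - 2)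
    (a : (Fin d → ZMod L) → (Fin d → ZMod L) → ℝ)
    (hlow : ∀ x y, Adj x y → ((1 : ℝ) + (max (tnorm x) (tnorm y) : ℕ)) ^ (-p) ≤ a x y)
    (f : (Fin d → ZMod L) → ℝ) (s : ℕ) :
    ((∑ x ∈ BoxF d L (2 ^ s - 1), f x) / ((BoxF d L (2 ^ s - 1)).card : ℝ)
      - (∑ y ∈ BoxF d L (2 ^ (s + 1) - 1), f y) / ((BoxF d L (2 ^ (s + 1) - 1)).card : ℝ)) ^ 2
    ≤ ((d : ℝ) * (2 : ℝ) ^ (p + 5) * ((2 : ℝ) ^ (p + 2 - (d : ℝ))) ^ s)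
        * nnSum (fun x y => a x y * (f x - f y) ^ 2) := by
  have h2 : (0 : ℝ) < 2 := two_pos
  set D := nnSum (fun x y => a x y * (f x - f y) ^ 2) with hD
  have hDnn : 0 ≤ D := nnSum_nonneg a hlow f
  set n : ℕ := 2 ^ s - 1 with hn
  set m : ℕ := 2 ^ (s + 1) - 1 with hm
  have hpow1 : (1 : ℕ) ≤ 2 ^ s := Nat.one_le_two_pow
  have hpow2 : (1 : ℕ) ≤ 2 ^ (s + 1) := Nat.one_le_two_pow
  have hmono : (2 : ℕ) ^ s ≤ 2 ^ (s + 1) := Nat.pow_le_pow_right (by norm_num) (by omega)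
  have hnm : n ≤ m := by omega
  by_cases hcase : 2 ^ s ≤ L
  · -- main case
    have hbound := avg_step (d := d) (L := L) (by omega) hL hp0 a hlow f hnm
    apply le_trans hbound
    apply mul_le_mul_of_nonneg_right _ hDnn
    -- numeric bound
    have hmcast : ((m : ℕ) : ℝ) = (2 : ℝ) ^ (s + 1) - 1 := by
      rw [hm]
      push_cast [Nat.cast_sub hpow2]
      ring
    have h1m : (1 : ℝ) + (m : ℕ) = (2 : ℝ) ^ (s + 1) := by rw [hmcast]; ring
    have hWm : ((window L m).card : ℝ) ≤ (2 : ℝ) ^ (s + 2) := by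
      have h1 := card_window_le (L := L) m
      have h2' : (2 * m + 1 : ℕ) ≤ 2 ^ (s + 2) := by
        rw [hm]
        have : (2:ℕ) ^ (s + 2) = 2 * 2 ^ (s+1) := by ring
        omega
      calc ((window L m).card : ℝ) ≤ ((2 * m + 1 : ℕ) : ℝ) := Nat.cast_le.mpr h1
        _ ≤ ((2 ^ (s + 2) : ℕ) : ℝ) := Nat.cast_le.mpr h2'
        _ = (2 : ℝ) ^ (s + 2) := by push_cast; ring
    have hW : (2 : ℝ) ^ s ≤ ((window L n).card : ℝ) := by
      have h1 := le_card_window (L := L) n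
      have h2' : (2 : ℕ) ^ s ≤ min (2 * n + 1) L := by
        rw [hn]
        have : 2 * (2 ^ s - 1) + 1 = 2 * 2 ^ s - 1 := by omega
        omega
      calc (2 : ℝ) ^ s = ((2 ^ s : ℕ) : ℝ) := by push_cast; ring
        _ ≤ ((window L n).card : ℝ) := Nat.cast_le.mpr (le_trans h2' h1)
    have hmle : ((m : ℕ) : ℝ) ≤ (2 : ℝ) ^ (s + 1) := by
      rw [hmcast]; norm_num
    rw [h1m]
    have hcoef : 4 * (d : ℝ) * (m : ℕ) * ((window L m).card : ℝ) * ((2 : ℝ) ^ (s + 1)) ^ p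
          / ((window L n).card : ℝ) ^ d
        ≤ 4 * (d : ℝ) * (2 : ℝ) ^ (s + 1) * (2 : ℝ) ^ (s + 2) * ((2 : ℝ) ^ (s + 1)) ^ p
          / ((2 : ℝ) ^ s) ^ d := by
      gcongr
      all_goals first
        | positivity
        | exact hW
        | exact hWm
        | exact hmle
    apply le_trans hcoef
    -- now a pure rpow identity
    set σ : ℝ := (s : ℝ) with hσ
    have c1 : ((2 : ℝ) ^ (s + 1 : ℕ)) = (2 : ℝ) ^ (σ + 1) := by
      rw [← Real.rpow_natCast 2 (s + 1)]
      push_cast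
      ring_nf
      rw [hσ]
    have c2 : ((2 : ℝ) ^ (s + 2 : ℕ)) = (2 : ℝ) ^ (σ + 2) := by
      rw [← Real.rpow_natCast 2 (s + 2)]
      push_cast
      ring_nf
      rw [hσ]
    have c3 : ((2 : ℝ) ^ (s : ℕ)) ^ (d : ℕ) = (2 : ℝ) ^ (σ * d) := by
      rw [← Real.rpow_natCast 2 s, ← Real.rpow_natCast ((2:ℝ) ^ (σ : ℝ)) d,
        ← Real.rpow_mul h2.le]
    have c4 : ((2 : ℝ) ^ (σ + 1)) ^ p = (2 : ℝ) ^ ((σ + 1) * p) :=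
      (Real.rpow_mul h2.le _ _).symm
    have c5 : ((2 : ℝ) ^ (p + 2 - (d : ℝ))) ^ (s : ℕ) = (2 : ℝ) ^ ((p + 2 - (d : ℝ)) * σ) := by
      rw [← Real.rpow_natCast ((2:ℝ) ^ (p + 2 - (d:ℝ))) s, ← Real.rpow_mul h2.le]
    have c6 : (4 : ℝ) = (2 : ℝ) ^ (2 : ℝ) := by
      rw [show (2 : ℝ) ^ (2 : ℝ) = (2 : ℝ) ^ (2 : ℕ) from by
        rw [← Real.rpow_natCast 2 2]; norm_num]
      norm_num
    rw [c1, c2, c3, c4, c5]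
    have merge : ∀ u v : ℝ, (2 : ℝ) ^ u * (2 : ℝ) ^ v = (2 : ℝ) ^ (u + v) :=
      fun u v => (Real.rpow_add h2 u v).symm
    have merge2 : ∀ u v : ℝ, (2 : ℝ) ^ u / (2 : ℝ) ^ v = (2 : ℝ) ^ (u - v) :=
      fun u v => (Real.rpow_sub h2 u v).symm
    refine le_of_eq ?_
    calc 4 * (d : ℝ) * (2:ℝ) ^ (σ + 1) * (2:ℝ) ^ (σ + 2) * (2:ℝ) ^ ((σ + 1) * p)
          / (2:ℝ) ^ (σ * (d:ℝ))
        = (d : ℝ) * ((2:ℝ) ^ (2:ℝ) * (2:ℝ) ^ (σ + 1) * (2:ℝ) ^ (σ + 2) * (2:ℝ) ^ ((σ + 1) * p)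
            / (2:ℝ) ^ (σ * (d:ℝ))) := by rw [c6]; ring
      _ = (d : ℝ) * ((2:ℝ) ^ ((2:ℝ) + (σ + 1) + (σ + 2) + ((σ + 1) * p))
            / (2:ℝ) ^ (σ * (d:ℝ))) := by rw [merge, merge, merge]
      _ = (d : ℝ) * (2:ℝ) ^ ((2:ℝ) + (σ + 1) + (σ + 2) + ((σ + 1) * p) - σ * (d:ℝ)) := by
            rw [merge2]
      _ = (d : ℝ) * (2:ℝ) ^ ((p + 5) + (p + 2 - (d:ℝ)) * σ) := by
            rw [show (2:ℝ) + (σ + 1) + (σ + 2) + ((σ + 1) * p) - σ * (d:ℝ)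
              = (p + 5) + (p + 2 - (d:ℝ)) * σ from by ring]
      _ = (d : ℝ) * ((2:ℝ) ^ (p + 5) * (2:ℝ) ^ ((p + 2 - (d:ℝ)) * σ)) := by rw [merge]
      _ = (d : ℝ) * (2:ℝ) ^ (p + 5) * (2:ℝ) ^ ((p + 2 - (d:ℝ)) * σ) := by ring
  · -- degenerate case: both boxes are everything
    have hLn : L / 2 ≤ n := by omega
    have hLm : L / 2 ≤ m := by omega
    rw [BoxF_eq_univ (d := d) hLn, BoxF_eq_univ (d := d) hLm, sub_self,
      zero_pow (two_ne_zero)]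
    positivity

end Aux

/-- Uniform bound on the Green's function at the origin of non-uniformly
elliptic weighted Laplacians on the torus, stated as a weighted Poincaré
inequality for mean-zero functions. -/
theorem weighted_green_bound (d : ℕ) (hd : 3 ≤ d) (p : ℝ) (hp0 : 0 ≤ p)
    (hp : p < (d : ℝ) - 2) :
    ∃ A : ℝ, ∀ (L : ℕ) [NeZero L], 2 ≤ L →
      ∀ a : (Fin d → ZMod L) → (Fin d → ZMod L) → ℝ,
      (∀ x y, a x y = a y x) →
      (∀ x y, Adj x y →
        ((1 : ℝ) + (max (tnorm x) (tnorm y) : ℕ)) ^ (-p) ≤ a x y) →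
      ∀ f : (Fin d → ZMod L) → ℝ, (∑ j : Fin d → ZMod L, f j) = 0 →
      (f 0) ^ 2 ≤ A * nnSum (fun x y => a x y * (f x - f y) ^ 2) := by
  have h2 : (0 : ℝ) < 2 := two_pos
  set r : ℝ := (2 : ℝ) ^ ((p + 2 - (d : ℝ)) / 2) with hr
  have hrpos : 0 < r := Real.rpow_pos_of_pos h2 _
  have hr1 : r < 1 := Real.rpow_lt_one_of_one_lt_of_neg (by norm_num) (by linarith)
  have h1r : 0 < 1 - r := by linarith
  set C1 : ℝ := (d : ℝ) * (2 : ℝ) ^ (p + 5) with hC1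
  have hC1nn : 0 ≤ C1 := by positivity
  have hrsq : r ^ 2 = (2 : ℝ) ^ (p + 2 - (d : ℝ)) := by
    rw [hr, ← Real.rpow_natCast ((2 : ℝ) ^ ((p + 2 - (d : ℝ)) / 2)) 2,
      ← Real.rpow_mul h2.le,
      show (p + 2 - (d : ℝ)) / 2 * ((2 : ℕ) : ℝ) = p + 2 - (d : ℝ) from by push_cast; ring]
  refine ⟨C1 * (1 / (1 - r)) ^ 2, ?_⟩
  intro L _ hL a hsym hlow f hmean
  set D := nnSum (fun x y => a x y * (f x - f y) ^ 2) with hD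
  have hDnn : 0 ≤ D := nnSum_nonneg a hlow f
  set F : ℕ → ℝ := fun s =>
    (∑ x ∈ BoxF d L (2 ^ s - 1), f x) / ((BoxF d L (2 ^ s - 1)).card : ℝ) with hF
  have hstep : ∀ s : ℕ, |F s - F (s + 1)| ≤ Real.sqrt (C1 * D) * r ^ s := by
    intro s
    have h1 : (F s - F (s + 1)) ^ 2
        ≤ ((d : ℝ) * (2 : ℝ) ^ (p + 5) * ((2 : ℝ) ^ (p + 2 - (d : ℝ))) ^ s) * D := by
      simp only [hF]
      exact dyadic_step hd hL hp0 hp a hlow f s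
    have hsq2 : (Real.sqrt (C1 * D) * r ^ s) ^ 2
        = (d : ℝ) * (2 : ℝ) ^ (p + 5) * ((2 : ℝ) ^ (p + 2 - (d : ℝ))) ^ s * D := by
      rw [mul_pow, Real.sq_sqrt (mul_nonneg hC1nn hDnn), pow_right_comm, hrsq, hC1]
      ring
    calc |F s - F (s + 1)| = Real.sqrt ((F s - F (s + 1)) ^ 2) :=
          (Real.sqrt_sq_eq_abs _).symm
      _ ≤ Real.sqrt ((Real.sqrt (C1 * D) * r ^ s) ^ 2) := by
          apply Real.sqrt_le_sqrt
          rw [hsq2]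
          exact h1
      _ = Real.sqrt (C1 * D) * r ^ s := Real.sqrt_sq (by positivity)
  have hF0 : F 0 = f 0 := by
    rw [hF]
    norm_num [BoxF_zero]
  have hfL : F L = 0 := by
    rw [hF]
    have hLlt : L < 2 ^ L := Nat.lt_two_pow_self
    have huniv : BoxF d L (2 ^ L - 1) = Finset.univ := BoxF_eq_univ (by omega)
    simp only [huniv, hmean, zero_div]
  have htele : f 0 = ∑ s ∈ Finset.range L, (F s - F (s + 1)) := by
    rw [Finset.sum_range_sub' F L, hF0, hfL, sub_zero]
  have hgeom : ∑ s ∈ Finset.range L, r ^ s ≤ 1 / (1 - r) := by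
    rw [geom_sum_eq (ne_of_lt hr1) L,
      show (r ^ L - 1) / (r - 1) = (1 - r ^ L) / (1 - r) from by
        rw [← neg_div_neg_eq]; ring_nf]
    apply div_le_div_of_nonneg_right _ h1r.le
    have : 0 ≤ r ^ L := by positivity
    linarith
  have habs : |f 0| ≤ Real.sqrt (C1 * D) * (1 / (1 - r)) := by
    calc |f 0| = |∑ s ∈ Finset.range L, (F s - F (s + 1))| := by rw [← htele]
      _ ≤ ∑ s ∈ Finset.range L, |F s - F (s + 1)| := Finset.abs_sum_le_sum_abs _ _
      _ ≤ ∑ s ∈ Finset.range L, Real.sqrt (C1 * D) * r ^ s :=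
          Finset.sum_le_sum fun s _ => hstep s
      _ = Real.sqrt (C1 * D) * ∑ s ∈ Finset.range L, r ^ s := by rw [Finset.mul_sum]
      _ ≤ Real.sqrt (C1 * D) * (1 / (1 - r)) :=
          mul_le_mul_of_nonneg_left hgeom (Real.sqrt_nonneg _)
  calc (f 0) ^ 2 = |f 0| ^ 2 := (sq_abs _).symm
    _ ≤ (Real.sqrt (C1 * D) * (1 / (1 - r))) ^ 2 := by
        apply pow_le_pow_left₀ (abs_nonneg _) habs
    _ = (C1 * (1 / (1 - r)) ^ 2) * D := by
        rw [mul_pow, Real.sq_sqrt (mul_nonneg hC1nn hDnn)]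
        ring


end SZ
end
end

section
/- Let D be a real symmetric n×n matrix, ψ₀ ∈ ℝⁿ a unit vector with Dψ₀ = 0, W a real symmetric positive definite n×n matrix, and h > 0. Let P₀ = ψ₀ψ₀ᵀ, P = I − P₀, P_t = P W P − (P W P₀ W P)/(ψ₀, Wψ₀), let D̃ be the restriction of P D P to the hyperplane ψ₀^⊥, and let P̃_t be the restriction of P_t to ψ₀^⊥. Then det(D + hW) = det(D̃ + h P̃_t) · h (ψ₀, Wψ₀), where the first determinant is over ℝⁿ and the second over the (n−1)-dimensional space ψ₀^⊥. -/
/-!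
STATEMENT 19: Block-determinant identity.  D real symmetric with Dψ₀ = 0,
‖ψ₀‖ = 1, W symmetric positive definite, h > 0, P₀ = ψ₀ψ₀ᵀ, P = I − P₀,
P_t = PWP − (PWP₀WP)/(ψ₀,Wψ₀).  Then
det(D + hW) = det(D̃ + hP̃_t) · h(ψ₀, Wψ₀),
where the determinant of the restriction to the hyperplane ψ₀^⊥ is encoded
(as D̃ ⊕ Id and P̃_t ⊕ 0 both preserve the splitting ψ₀^⊥ ⊕ ℝψ₀) by
det(D̃ + hP̃_t) = det(PDP + hP_t + P₀) over ℝⁿ.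
-/

open Matrix

theorem det_regularization_identity (n : ℕ) (hn : 1 ≤ n)
    (D : Matrix (Fin n) (Fin n) ℝ) (hD : D.IsSymm)
    (ψ : Fin n → ℝ) (hψ : ∑ i, ψ i ^ 2 = 1) (hDψ : D.mulVec ψ = 0)
    (W : Matrix (Fin n) (Fin n) ℝ) (hW : W.PosDef)
    (h : ℝ) (hh : 0 < h) :
    (D + h • W).det =
      ((1 - vecMulVec ψ ψ) * D * (1 - vecMulVec ψ ψ)
        + h • ((1 - vecMulVec ψ ψ) * W * (1 - vecMulVec ψ ψ)
            - (ψ ⬝ᵥ W.mulVec ψ)⁻¹ •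
              ((1 - vecMulVec ψ ψ) * W * vecMulVec ψ ψ * W * (1 - vecMulVec ψ ψ)))
        + vecMulVec ψ ψ).det
      * (h * (ψ ⬝ᵥ W.mulVec ψ)) := by
  classical
  have hψ' : ∑ k, ψ k * ψ k = 1 := by simpa [sq] using hψ
  have hψψ : ψ ⬝ᵥ ψ = 1 := by simpa [dotProduct] using hψ'
  have hψ0 : ψ ≠ 0 := by
    intro h0
    rw [h0] at hψ'
    simp at hψ'
  set a : ℝ := ψ ⬝ᵥ W.mulVec ψ with hadef
  have ha : 0 < a := by simpa using hW.dotProduct_mulVec_pos hψ0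
  have ha0 : a ≠ 0 := ne_of_gt ha
  set Q : Matrix (Fin n) (Fin n) ℝ := vecMulVec ψ ψ with hQdef
  -- basic multiplication lemmas
  have hmulQ : ∀ M : Matrix (Fin n) (Fin n) ℝ, M * Q = vecMulVec (M *ᵥ ψ) ψ := by
    intro M
    ext i j
    simp [hQdef, Matrix.mul_apply, vecMulVec_apply, mulVec, dotProduct,
      Finset.sum_mul, mul_assoc]
  have hQmul : ∀ M : Matrix (Fin n) (Fin n) ℝ, Q * M = vecMulVec ψ (ψ ᵥ* M) := by
    intro M
    ext i j
    simp [hQdef, Matrix.mul_apply, vecMulVec_apply, vecMul, dotProduct,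
      Finset.mul_sum, mul_assoc]
  have hQv : Q *ᵥ ψ = ψ := by
    ext i
    simp only [hQdef, mulVec, dotProduct, vecMulVec_apply]
    simp_rw [mul_assoc, ← Finset.mul_sum, hψ', mul_one]
  have hvQ : ψ ᵥ* Q = ψ := by
    ext j
    simp only [hQdef, vecMul, dotProduct, vecMulVec_apply]
    simp_rw [← mul_assoc, ← Finset.sum_mul, hψ', one_mul]
  have hQQ : Q * Q = Q := by rw [hmulQ, hQv]
  have hDQ : D * Q = 0 := by
    rw [hmulQ, hDψ]
    ext i j
    simp [vecMulVec_apply]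
  have hvD : ψ ᵥ* D = 0 := by
    have := hD.eq
    calc ψ ᵥ* D = ψ ᵥ* Dᵀ := by rw [hD.eq]
    _ = D *ᵥ ψ := vecMul_transpose D ψ
    _ = 0 := hDψ
  have hQD : Q * D = 0 := by
    rw [hQmul, hvD]
    ext i j
    simp [vecMulVec_apply]
  have huQ : ∀ u : Fin n → ℝ, u ᵥ* Q = (u ⬝ᵥ ψ) • ψ := by
    intro u
    ext j
    simp only [hQdef, vecMul, dotProduct, vecMulVec_apply, Pi.smul_apply, smul_eq_mul]
    simp_rw [← mul_assoc, ← Finset.sum_mul]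
  have hQWQ : Q * (W * Q) = a • Q := by
    rw [hQmul (W * Q), ← vecMul_vecMul, huQ, ← dotProduct_mulVec, ← hadef]
    ext i j
    simp only [hQdef, vecMulVec_apply, Pi.smul_apply, smul_eq_mul,
      Matrix.smul_apply]
    ring
  -- associated forms
  have hQQ' : ∀ X : Matrix (Fin n) (Fin n) ℝ, Q * (Q * X) = Q * X := by
    intro X; rw [← mul_assoc, hQQ]
  have hDQ' : ∀ X : Matrix (Fin n) (Fin n) ℝ, D * (Q * X) = 0 := by
    intro X; rw [← mul_assoc, hDQ, zero_mul]
  have hQD' : ∀ X : Matrix (Fin n) (Fin n) ℝ, Q * (D * X) = 0 := by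
    intro X; rw [← mul_assoc, hQD, zero_mul]
  have hQWQ' : ∀ X : Matrix (Fin n) (Fin n) ℝ, Q * (W * (Q * X)) = a • (Q * X) := by
    intro X
    rw [show Q * (W * (Q * X)) = Q * (W * Q) * X by rw [mul_assoc, mul_assoc],
      hQWQ, smul_mul_assoc]
  -- the three elementary factors
  set L : Matrix (Fin n) (Fin n) ℝ := 1 + a⁻¹ • ((1 - Q) * W * Q) with hLdef
  set R : Matrix (Fin n) (Fin n) ℝ := 1 + a⁻¹ • (Q * (W * (1 - Q))) with hRdef
  set S : Matrix (Fin n) (Fin n) ℝ := 1 + (h * a - 1) • Q with hSdef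
  set C : Matrix (Fin n) (Fin n) ℝ :=
    (1 - Q) * D * (1 - Q)
      + h • ((1 - Q) * W * (1 - Q) - a⁻¹ • ((1 - Q) * W * Q * W * (1 - Q)))
      + Q with hCdef
  have key : L * (C * S) * R = D + h • W := by
    rw [hLdef, hRdef, hSdef, hCdef]
    simp only [mul_add, add_mul, mul_sub, sub_mul, mul_one, one_mul,
      smul_mul_assoc, mul_smul_comm, smul_sub, smul_add, smul_smul, mul_assoc,
      hQQ, hQQ', hDQ, hDQ', hQD, hQD', hQWQ, hQWQ',
      mul_zero, zero_mul, smul_zero, add_zero, zero_add, sub_zero, zero_sub]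
    match_scalars <;> field_simp <;> ring
  have detL : L.det = 1 := by
    have : (1 - Q) * W * Q = vecMulVec (((1 - Q) * W) *ᵥ ψ) ψ := hmulQ _
    rw [hLdef, this]
    have hsm : a⁻¹ • vecMulVec (((1 - Q) * W) *ᵥ ψ) ψ
        = vecMulVec (a⁻¹ • (((1 - Q) * W) *ᵥ ψ)) ψ := by
      ext i j; simp [vecMulVec_apply, mul_assoc]
    rw [hsm, vecMulVec_eq (Fin 1), det_one_add_replicateCol_mul_replicateRow]
    have : ψ ⬝ᵥ a⁻¹ • (((1 - Q) * W) *ᵥ ψ) = 0 := by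
      rw [← mulVec_mulVec, dotProduct_smul, dotProduct_mulVec]
      have : ψ ᵥ* (1 - Q) = 0 := by
        rw [vecMul_sub, vecMul_one, hvQ, sub_self]
      rw [this]
      simp
    rw [this, add_zero]
  have detR : R.det = 1 := by
    have : Q * (W * (1 - Q)) = vecMulVec ψ (ψ ᵥ* (W * (1 - Q))) := hQmul _
    rw [hRdef, this]
    have hsm : a⁻¹ • vecMulVec ψ (ψ ᵥ* (W * (1 - Q)))
        = vecMulVec ψ (a⁻¹ • (ψ ᵥ* (W * (1 - Q)))) := by
      ext i j; simp [vecMulVec_apply]; ring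
    rw [hsm, vecMulVec_eq (Fin 1), det_one_add_replicateCol_mul_replicateRow]
    have : (a⁻¹ • (ψ ᵥ* (W * (1 - Q)))) ⬝ᵥ ψ = 0 := by
      rw [smul_dotProduct, ← dotProduct_mulVec, ← mulVec_mulVec]
      have : (1 - Q) *ᵥ ψ = 0 := by
        rw [sub_mulVec, one_mulVec, hQv, sub_self]
      rw [this]
      simp
    rw [this, add_zero]
  have detS : S.det = h * a := by
    have hsm : (h * a - 1) • Q = vecMulVec ((h * a - 1) • ψ) ψ := by
      ext i j; simp [hQdef, vecMulVec_apply, mul_assoc]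
    rw [hSdef, hsm, vecMulVec_eq (Fin 1), det_one_add_replicateCol_mul_replicateRow]
    rw [dotProduct_smul, hψψ]
    simp only [smul_eq_mul]
    ring
  calc (D + h • W).det = (L * (C * S) * R).det := by rw [key]
    _ = L.det * (C.det * S.det) * R.det := by rw [det_mul, det_mul, det_mul]
    _ = C.det * (h * a) := by rw [detL, detR, detS]; ring
end
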